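/- arXiv:1912.09422 — 7 statements merged into one kernel-verified Lean document; each statement's English description precedes it below -/
import Mathlib

section
/- Let G1 and G2 be weighted cubic trees whose leaf sets are labeled by the same finite set L, via bijections ℓ1 from L onto the leaves of G1 and ℓ2 from L onto the leaves of G2. If the leaf distances agree, i.e. d1(ℓ1(i), ℓ1(j)) = d2(ℓ2(i), ℓ2(j)) for all i, j in L, then there exists a graph isomorphism φ from G1 to G2 that maps ℓ1(i) to ℓ2(i) for every i in L and preserves edge weights (the weight of every edge e of G1 equals the weight of the edge φ(e) of G2). -/
/-- A weighted cubic tree: a finite connected acyclic simple graph in which every vertex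
has degree 1 or 3, with a strictly positive real weight on each edge. -/
structure WCubicTree where
  V : Type
  [fintypeV : Fintype V]
  [decEqV : DecidableEq V]
  G : SimpleGraph V
  [decAdj : DecidableRel G.Adj]
  connected : G.Connected
  acyclic : G.IsAcyclic
  cubic : ∀ v : V, G.degree v = 1 ∨ G.degree v = 3
  w : Sym2 V → ℝ
  w_pos : ∀ e ∈ G.edgeSet, 0 < w e

attribute [instance] WCubicTree.fintypeV WCubicTree.decEqV WCubicTree.decAdj

/-- A leaf is a vertex of degree 1. -/
def WCubicTree.IsLeaf (T : WCubicTree) (v : T.V) : Prop := T.G.degree v = 1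

/-- Some walk between two vertices, which exists by connectedness. -/
noncomputable def WCubicTree.walk (T : WCubicTree) (u v : T.V) : T.G.Walk u v :=
  Classical.choice (T.connected.preconnected u v)

/-- The distance between two vertices: the sum of the weights of the edges of the
(unique, by acyclicity) path joining them. -/
noncomputable def WCubicTree.dist (T : WCubicTree) (u v : T.V) : ℝ :=
  (((T.walk u v).toPath : T.G.Path u v).val.edges.map T.w).sum

namespace WCubicTree

variable (T : WCubicTree)

/-- The canonical path between two vertices. -/
noncomputable def cpath (u v : T.V) : T.G.Walk u v :=
  ((T.walk u v).toPath : T.G.Path u v).val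

lemma cpath_isPath (u v : T.V) : (T.cpath u v).IsPath :=
  ((T.walk u v).toPath : T.G.Path u v).property

lemma path_unique {u v : T.V} (p q : T.G.Walk u v) (hp : p.IsPath) (hq : q.IsPath) :
    p = q := by
  have h := SimpleGraph.isAcyclic_iff_path_unique.mp T.acyclic (p := ⟨p, hp⟩) (q := ⟨q, hq⟩)
  exact congrArg Subtype.val h

lemma eq_cpath {u v : T.V} (p : T.G.Walk u v) (hp : p.IsPath) : p = T.cpath u v :=
  T.path_unique p _ hp (T.cpath_isPath u v)

lemma dist_def (u v : T.V) : T.dist u v = ((T.cpath u v).edges.map T.w).sum := rfl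

lemma dist_eq {u v : T.V} (p : T.G.Walk u v) (hp : p.IsPath) :
    T.dist u v = (p.edges.map T.w).sum := by
  rw [dist_def, T.eq_cpath p hp]

lemma dist_self (u : T.V) : T.dist u u = 0 := by
  rw [T.dist_eq SimpleGraph.Walk.nil SimpleGraph.Walk.IsPath.nil]; simp

lemma dist_comm (u v : T.V) : T.dist u v = T.dist v u := by
  rw [T.dist_eq ((T.cpath u v).reverse) ((T.cpath_isPath u v).reverse)]
  rw [dist_def, SimpleGraph.Walk.edges_reverse, List.map_reverse, List.sum_reverse]

lemma dist_nonneg (u v : T.V) : 0 ≤ T.dist u v := by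
  rw [dist_def]
  apply List.sum_nonneg
  intro x hx
  obtain ⟨e, he, rfl⟩ := List.mem_map.mp hx
  exact (T.w_pos e ((T.cpath u v).edges_subset_edgeSet he)).le

lemma dist_pos {u v : T.V} (h : u ≠ v) : 0 < T.dist u v := by
  rw [dist_def]
  cases hp : T.cpath u v with
  | nil => exact absurd rfl h
  | cons ha q =>
    simp only [SimpleGraph.Walk.edges_cons, List.map_cons, List.sum_cons]
    have h1 : 0 < T.w s(u, _) := T.w_pos _ ha
    have h2 : 0 ≤ (q.edges.map T.w).sum := by
      apply List.sum_nonneg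
      intro x hx
      obtain ⟨e, he, rfl⟩ := List.mem_map.mp hx
      exact (T.w_pos e (q.edges_subset_edgeSet he)).le
    linarith

lemma dist_adj {u v : T.V} (h : T.G.Adj u v) : T.dist u v = T.w s(u, v) := by
  rw [T.dist_eq (SimpleGraph.Walk.cons h SimpleGraph.Walk.nil) (by simp [h.ne])]
  simp

lemma dist_eq_zero_iff {u v : T.V} : T.dist u v = 0 ↔ u = v := by
  constructor
  · intro h; by_contra hne; exact absurd h (T.dist_pos hne).ne'
  · rintro rfl; exact T.dist_self u

lemma dist_add_of_mem {u v z : T.V} (hz : z ∈ (T.cpath u v).support) :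
    T.dist u v = T.dist u z + T.dist z v := by
  have hp := T.cpath_isPath u v
  have h1 : ((T.cpath u v).takeUntil z hz).IsPath := hp.takeUntil hz
  have h2 : ((T.cpath u v).dropUntil z hz).IsPath := hp.dropUntil hz
  have hs : (T.cpath u v).edges
      = ((T.cpath u v).takeUntil z hz).edges ++ ((T.cpath u v).dropUntil z hz).edges := by
    conv_lhs => rw [← SimpleGraph.Walk.take_spec (T.cpath u v) hz]
    exact SimpleGraph.Walk.edges_append _ _
  rw [T.dist_eq _ h1, T.dist_eq _ h2, dist_def, hs, List.map_append, List.sum_append]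

private lemma list_sum_le {α : Type*} [DecidableEq α] {l₁ l₂ : List α} (f : α → ℝ)
    (hn : l₁.Nodup) (hs : l₁ ⊆ l₂) (hf : ∀ a ∈ l₂, 0 ≤ f a) :
    (l₁.map f).sum ≤ (l₂.map f).sum := by
  have hle : (l₁ : Multiset α) ≤ (l₂ : Multiset α) := by
    rw [Multiset.le_iff_count]
    intro a
    by_cases ha : a ∈ l₁
    · have h1 : l₁.count a ≤ 1 := List.nodup_iff_count_le_one.mp hn a
      have h2 : 1 ≤ l₂.count a := List.count_pos_iff.mpr (hs ha)
      simpa using h1.trans h2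
    · simp [List.count_eq_zero_of_not_mem ha]
  obtain ⟨t, ht⟩ := Multiset.le_iff_exists_add.mp hle
  have : ((l₂ : Multiset α).map f).sum = ((l₁ : Multiset α).map f).sum + (t.map f).sum := by
    rw [ht, Multiset.map_add, Multiset.sum_add]
  have htn : 0 ≤ (t.map f).sum := by
    apply Multiset.sum_nonneg
    intro x hx
    obtain ⟨e, he, rfl⟩ := Multiset.mem_map.mp hx
    refine hf e ?_
    have he2 : e ∈ (l₂ : Multiset α) := by
      rw [ht]
      exact Multiset.mem_add.mpr (Or.inr he)
    exact Multiset.mem_coe.mp he2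
  have h1 : (l₁.map f).sum = ((l₁ : Multiset α).map f).sum := by simp
  have h2 : (l₂.map f).sum = ((l₂ : Multiset α).map f).sum := by simp
  rw [h1, h2, this]; linarith

lemma dist_le_walk {u v : T.V} (p : T.G.Walk u v) : T.dist u v ≤ (p.edges.map T.w).sum := by
  rw [T.dist_eq p.bypass p.bypass_isPath]
  exact list_sum_le T.w p.bypass_isPath.isTrail.edges_nodup p.edges_bypass_subset
    (fun a ha => (T.w_pos a (p.edges_subset_edgeSet ha)).le)

lemma dist_triangle (u z v : T.V) : T.dist u v ≤ T.dist u z + T.dist z v := by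
  have h := T.dist_le_walk ((T.cpath u z).append (T.cpath z v))
  rwa [SimpleGraph.Walk.edges_append, List.map_append, List.sum_append,
    ← dist_def, ← dist_def] at h

lemma mem_cpath_or {u v z : T.V} (hz : z ∈ (T.cpath u v).support) (x : T.V) :
    z ∈ (T.cpath x u).support ∨ z ∈ (T.cpath x v).support := by
  set W : T.G.Walk u v := (T.cpath x u).reverse.append (T.cpath x v) with hW
  have hb : W.bypass = T.cpath u v := T.eq_cpath _ W.bypass_isPath
  have h1 : z ∈ W.support := W.support_bypass_subset (hb ▸ hz)
  rw [hW, SimpleGraph.Walk.mem_support_append_iff, SimpleGraph.Walk.support_reverse,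
    List.mem_reverse] at h1
  exact h1

lemma mem_split {u v y z : T.V} (hz : z ∈ (T.cpath u v).support)
    (hy : y ∈ (T.cpath u v).support) :
    y ∈ (T.cpath u z).support ∨ y ∈ (T.cpath z v).support := by
  have hp := T.cpath_isPath u v
  have h1 : (T.cpath u v).takeUntil z hz = T.cpath u z := T.eq_cpath _ (hp.takeUntil hz)
  have h2 : (T.cpath u v).dropUntil z hz = T.cpath z v := T.eq_cpath _ (hp.dropUntil hz)
  rw [← h1, ← h2]
  rw [← SimpleGraph.Walk.take_spec (T.cpath u v) hz,
    SimpleGraph.Walk.mem_support_append_iff] at hy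
  exact hy

lemma support_adj {u v : T.V} (h : T.G.Adj u v) : (T.cpath u v).support = [u, v] := by
  rw [← T.eq_cpath (SimpleGraph.Walk.cons h SimpleGraph.Walk.nil) (by simp [h.ne])]
  simp

lemma cpath_drop {u v m : T.V} (hm : m ∈ (T.cpath u v).support) :
    (T.cpath u v).dropUntil m hm = T.cpath m v :=
  T.eq_cpath _ ((T.cpath_isPath u v).dropUntil hm)

lemma median (a b c : T.V) : ∃ m, m ∈ (T.cpath a b).support ∧
    T.dist a b = T.dist a m + T.dist m b ∧
    T.dist a c = T.dist a m + T.dist m c ∧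
    T.dist b c = T.dist b m + T.dist m c := by
  classical
  set S : Finset T.V :=
    ((T.cpath a b).support.toFinset ∩ (T.cpath a c).support.toFinset) with hSdef
  have hS : a ∈ S := by
    simp only [hSdef, Finset.mem_inter, List.mem_toFinset]
    exact ⟨(T.cpath a b).start_mem_support, (T.cpath a c).start_mem_support⟩
  obtain ⟨m, hmS, hmax⟩ := S.exists_max_image (fun x => T.dist a x) ⟨a, hS⟩
  rw [hSdef, Finset.mem_inter, List.mem_toFinset, List.mem_toFinset] at hmS
  obtain ⟨hm1, hm2⟩ := hmS
  have hab : T.dist a b = T.dist a m + T.dist m b := T.dist_add_of_mem hm1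
  have hac : T.dist a c = T.dist a m + T.dist m c := T.dist_add_of_mem hm2
  have key : ∀ z, z ∈ (T.cpath m b).support → z ∈ (T.cpath m c).support → z = m := by
    intro z h1 h2
    have hz1 : z ∈ (T.cpath a b).support := by
      rw [← T.cpath_drop hm1] at h1
      exact (T.cpath a b).support_dropUntil_subset hm1 h1
    have hz2 : z ∈ (T.cpath a c).support := by
      rw [← T.cpath_drop hm2] at h2
      exact (T.cpath a c).support_dropUntil_subset hm2 h2
    have e1 : T.dist a b = T.dist a z + T.dist z b := T.dist_add_of_mem hz1
    have e2 : T.dist m b = T.dist m z + T.dist z b := T.dist_add_of_mem h1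
    have hmax' : T.dist a z ≤ T.dist a m := by
      apply hmax
      rw [hSdef, Finset.mem_inter, List.mem_toFinset, List.mem_toFinset]
      exact ⟨hz1, hz2⟩
    have : T.dist m z = 0 := by
      have h0 := T.dist_nonneg m z
      linarith
    rw [T.dist_comm m z] at this
    exact T.dist_eq_zero_iff.mp this
  -- build the path from b to c through m
  set W : T.G.Walk b c := (T.cpath m b).reverse.append (T.cpath m c) with hWdef
  have hWp : W.IsPath := by
    apply SimpleGraph.Walk.IsPath.mk'
    rw [SimpleGraph.Walk.support_append, SimpleGraph.Walk.support_reverse]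
    apply List.Nodup.append
    · exact List.nodup_reverse.mpr (T.cpath_isPath m b).support_nodup
    · exact (T.cpath_isPath m c).support_nodup.tail
    · intro z hz1 hz2
      rw [List.mem_reverse] at hz1
      have hz2' : z ∈ (T.cpath m c).support := List.mem_of_mem_tail hz2
      have hzm := key z hz1 hz2'
      have hnd := (T.cpath_isPath m c).support_nodup
      rw [(T.cpath m c).support_eq_cons] at hnd
      exact absurd (hzm ▸ hz2) (List.nodup_cons.mp hnd).1
  have hWeq : W = T.cpath b c := T.eq_cpath W hWp
  have hmW : m ∈ (T.cpath b c).support := by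
    rw [← hWeq, hWdef, SimpleGraph.Walk.mem_support_append_iff]
    left
    rw [SimpleGraph.Walk.support_reverse, List.mem_reverse]
    exact (T.cpath m b).start_mem_support
  exact ⟨m, hm1, hab, hac, T.dist_add_of_mem hmW⟩

lemma between_iff {u v z : T.V} :
    T.dist u z + T.dist z v = T.dist u v ↔ z ∈ (T.cpath u v).support := by
  constructor
  · intro h
    obtain ⟨m, hm, e1, e2, e3⟩ := T.median u v z
    have hc1 := T.dist_comm z v
    have hc2 := T.dist_comm m v
    have : T.dist m z = 0 := by linarith
    have := T.dist_eq_zero_iff.mp this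
    subst this
    exact hm
  · intro h
    exact (T.dist_add_of_mem h).symm

lemma exists_leaf_branch (u v : T.V) : ∃ x, T.IsLeaf x ∧
    T.dist x v = T.dist x u + T.dist u v := by
  classical
  set S : Finset T.V :=
    Finset.univ.filter (fun x => T.dist x v = T.dist x u + T.dist u v) with hSdef
  have hu : u ∈ S := by simp [hSdef, T.dist_self]
  obtain ⟨x, hxS, hmax⟩ := S.exists_max_image (fun x => T.dist x v) ⟨u, hu⟩
  have hx : T.dist x v = T.dist x u + T.dist u v := by
    simpa [hSdef] using hxS
  refine ⟨x, ?_, hx⟩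
  rcases T.cubic x with h1 | h3
  · exact h1
  · exfalso
    have huniq : ∀ y ∈ (T.G.neighborFinset x).filter (· ∈ (T.cpath x v).support),
        ∀ y' ∈ (T.G.neighborFinset x).filter (· ∈ (T.cpath x v).support), y = y' := by
      intro y hy y' hy'
      simp only [Finset.mem_filter, SimpleGraph.mem_neighborFinset] at hy hy'
      obtain ⟨hay, hys⟩ := hy
      obtain ⟨hay', hys'⟩ := hy'
      by_contra hne
      have hyy' : y' ∈ (T.cpath y v).support := by
        rcases T.mem_split hys hys' with h | h
        · rw [T.support_adj hay] at h
          simp only [List.mem_cons, List.mem_singleton] at h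
          rcases h with h | h
          · exact absurd h.symm hay'.ne
          · simp at h; exact absurd h.symm hne
        · exact h
      have hy'y : y ∈ (T.cpath y' v).support := by
        rcases T.mem_split hys' hys with h | h
        · rw [T.support_adj hay'] at h
          simp only [List.mem_cons, List.mem_singleton] at h
          rcases h with h | h
          · exact absurd h.symm hay.ne
          · simp at h; exact absurd h hne
        · exact h
      have e1 := T.dist_add_of_mem hyy'
      have e2 := T.dist_add_of_mem hy'y
      have e3 := T.dist_comm y y'
      have : T.dist y y' = 0 := by linarith
      exact hne (T.dist_eq_zero_iff.mp this)
    have hcard : ((T.G.neighborFinset x).filter (· ∈ (T.cpath x v).support)).card ≤ 1 :=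
      Finset.card_le_one.mpr (fun a ha b hb => huniq a ha b hb)
    have hdeg : (T.G.neighborFinset x).card = 3 := by
      rw [T.G.card_neighborFinset_eq_degree]; exact h3
    have hexy : ∃ y ∈ T.G.neighborFinset x, y ∉ (T.cpath x v).support := by
      by_contra hco
      push_neg at hco
      have hsub : T.G.neighborFinset x ⊆
          (T.G.neighborFinset x).filter (· ∈ (T.cpath x v).support) := by
        intro y hy
        exact Finset.mem_filter.mpr ⟨hy, hco y hy⟩
      have := Finset.card_le_card hsub
      omega
    obtain ⟨y, hyn, hyns⟩ := hexy
    have hay : T.G.Adj x y := (SimpleGraph.mem_neighborFinset _ _ _).mp hyn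
    set W : T.G.Walk y v := SimpleGraph.Walk.cons hay.symm (T.cpath x v) with hWdef
    have hWp : W.IsPath := by
      rw [hWdef, SimpleGraph.Walk.cons_isPath_iff]
      exact ⟨T.cpath_isPath x v, hyns⟩
    have hyv : T.dist y v = T.w s(y, x) + T.dist x v := by
      rw [T.dist_eq W hWp, hWdef, SimpleGraph.Walk.edges_cons, List.map_cons, List.sum_cons,
        ← dist_def]
    have hwpos : 0 < T.w s(y, x) := T.w_pos _ ((T.G.mem_edgeSet).mpr hay.symm)
    have hdyx : T.dist y x = T.w s(y, x) := T.dist_adj hay.symm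
    have t1 : T.dist y u ≤ T.dist y x + T.dist x u := T.dist_triangle y x u
    have t2 : T.dist y v ≤ T.dist y u + T.dist u v := T.dist_triangle y u v
    have hyS : y ∈ S := by
      simp only [hSdef, Finset.mem_filter, Finset.mem_univ, true_and]
      linarith
    have := hmax y hyS
    linarith

lemma exists_leaf_median (u : T.V) : ∃ a b c : T.V, T.IsLeaf a ∧ T.IsLeaf b ∧ T.IsLeaf c ∧
    T.dist a b = T.dist a u + T.dist u b ∧
    T.dist a c = T.dist a u + T.dist u c ∧
    T.dist b c = T.dist b u + T.dist u c := by
  have pair : ∀ (nj nk xj xk : T.V), T.G.Adj u nj → T.G.Adj u nk → nj ≠ nk →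
      T.dist xj u = T.dist xj nj + T.dist nj u →
      T.dist xk u = T.dist xk nk + T.dist nk u →
      T.dist xj xk = T.dist xj u + T.dist u xk := by
    intro nj nk xj xk haj hak hjk hxj hxk
    obtain ⟨m, hm, e1, e2, e3⟩ := T.median xj xk u
    suffices hmu : m = u by
      subst hmu
      rw [e1, e2, T.dist_comm m xk]
    by_contra hne
    have step : ∀ (n x : T.V), T.G.Adj u n →
        T.dist x u = T.dist x n + T.dist n u →
        T.dist x u = T.dist x m + T.dist m u →
        n ∈ (T.cpath m u).support := by
      intro n x han hxn hxm
      have hnmem : n ∈ (T.cpath x u).support := T.between_iff.mp hxn.symm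
      have hmmem : m ∈ (T.cpath x u).support := T.between_iff.mp hxm.symm
      rcases T.mem_split hmmem hnmem with h | h
      · have e4 : T.dist x m = T.dist x n + T.dist n m := T.dist_add_of_mem h
        have e5 : T.dist n m + T.dist m u = T.dist n u := by linarith
        have hmnu : m ∈ (T.cpath n u).support := T.between_iff.mp e5
        rw [T.support_adj han.symm] at hmnu
        simp only [List.mem_cons, List.mem_singleton, List.not_mem_nil, or_false] at hmnu
        rcases hmnu with h' | h'
        · rw [← h']
          exact (T.cpath m u).start_mem_support
        · exact absurd h' hne
      · exact h
    have hj : nj ∈ (T.cpath m u).support := step nj xj haj hxj e2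
    have hk : nk ∈ (T.cpath m u).support := step nk xk hak hxk e3
    have ej : T.dist m u = T.dist m nj + T.dist nj u := T.dist_add_of_mem hj
    have ek : T.dist m u = T.dist m nk + T.dist nk u := T.dist_add_of_mem hk
    rcases T.mem_split hj hk with h | h
    · have e6 : T.dist m nj = T.dist m nk + T.dist nk nj := T.dist_add_of_mem h
      have e7 : T.dist nk nj + T.dist nj u = T.dist nk u := by linarith
      have : nj ∈ (T.cpath nk u).support := T.between_iff.mp e7
      rw [T.support_adj hak.symm] at this
      simp only [List.mem_cons, List.mem_singleton, List.not_mem_nil, or_false] at this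
      rcases this with h' | h'
      · exact hjk h'
      · exact haj.ne' h'
    · rw [T.support_adj haj.symm] at h
      simp only [List.mem_cons, List.mem_singleton, List.not_mem_nil, or_false] at h
      rcases h with h' | h'
      · exact hjk h'.symm
      · exact hak.ne' h'
  rcases T.cubic u with h1 | h3
  · exact ⟨u, u, u, h1, h1, h1, by simp [T.dist_self]⟩
  · have hdeg : (T.G.neighborFinset u).card = 3 := by
      rw [T.G.card_neighborFinset_eq_degree]; exact h3
    obtain ⟨n1, n2, n3, h12, h13, h23, hnf⟩ := Finset.card_eq_three.mp hdeg
    have ha1 : T.G.Adj u n1 := by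
      have : n1 ∈ T.G.neighborFinset u := by rw [hnf]; simp
      exact (SimpleGraph.mem_neighborFinset _ _ _).mp this
    have ha2 : T.G.Adj u n2 := by
      have : n2 ∈ T.G.neighborFinset u := by rw [hnf]; simp
      exact (SimpleGraph.mem_neighborFinset _ _ _).mp this
    have ha3 : T.G.Adj u n3 := by
      have : n3 ∈ T.G.neighborFinset u := by rw [hnf]; simp
      exact (SimpleGraph.mem_neighborFinset _ _ _).mp this
    obtain ⟨x1, hl1, hx1⟩ := T.exists_leaf_branch n1 u
    obtain ⟨x2, hl2, hx2⟩ := T.exists_leaf_branch n2 u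
    obtain ⟨x3, hl3, hx3⟩ := T.exists_leaf_branch n3 u
    exact ⟨x1, x2, x3, hl1, hl2, hl3,
      pair n1 n2 x1 x2 ha1 ha2 h12 hx1 hx2,
      pair n1 n3 x1 x3 ha1 ha3 h13 hx1 hx3,
      pair n2 n3 x2 x3 ha2 ha3 h23 hx2 hx3⟩

lemma two_dist_median {a b c m : T.V} (x : T.V)
    (hab : T.dist a b = T.dist a m + T.dist m b)
    (hac : T.dist a c = T.dist a m + T.dist m c)
    (hbc : T.dist b c = T.dist b m + T.dist m c) :
    2 * T.dist x m =
      max (max (T.dist x a + T.dist x b - T.dist a b) (T.dist x a + T.dist x c - T.dist a c))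
        (T.dist x b + T.dist x c - T.dist b c) := by
  have ta : T.dist x a ≤ T.dist x m + T.dist m a := T.dist_triangle x m a
  have tb : T.dist x b ≤ T.dist x m + T.dist m b := T.dist_triangle x m b
  have tc : T.dist x c ≤ T.dist x m + T.dist m c := T.dist_triangle x m c
  have cma := T.dist_comm m a
  have cmb := T.dist_comm m b
  have cmc := T.dist_comm m c
  have cmx := T.dist_comm m x
  apply le_antisymm
  · have mab : m ∈ (T.cpath a b).support := T.between_iff.mp hab.symm
    have mac : m ∈ (T.cpath a c).support := T.between_iff.mp hac.symm
    have mbc : m ∈ (T.cpath b c).support := T.between_iff.mp hbc.symm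
    have dab : T.dist x a = T.dist x m + T.dist m a ∨ T.dist x b = T.dist x m + T.dist m b := by
      rcases T.mem_cpath_or mab x with h | h
      · exact Or.inl (T.dist_add_of_mem h)
      · exact Or.inr (T.dist_add_of_mem h)
    have dac : T.dist x a = T.dist x m + T.dist m a ∨ T.dist x c = T.dist x m + T.dist m c := by
      rcases T.mem_cpath_or mac x with h | h
      · exact Or.inl (T.dist_add_of_mem h)
      · exact Or.inr (T.dist_add_of_mem h)
    have dbc : T.dist x b = T.dist x m + T.dist m b ∨ T.dist x c = T.dist x m + T.dist m c := by
      rcases T.mem_cpath_or mbc x with h | h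
      · exact Or.inl (T.dist_add_of_mem h)
      · exact Or.inr (T.dist_add_of_mem h)
    have hpair : (T.dist x a = T.dist x m + T.dist m a ∧ T.dist x b = T.dist x m + T.dist m b)
        ∨ (T.dist x a = T.dist x m + T.dist m a ∧ T.dist x c = T.dist x m + T.dist m c)
        ∨ (T.dist x b = T.dist x m + T.dist m b ∧ T.dist x c = T.dist x m + T.dist m c) := by
      tauto
    rcases hpair with ⟨h1, h2⟩ | ⟨h1, h2⟩ | ⟨h1, h2⟩
    · have : T.dist x a + T.dist x b - T.dist a b = 2 * T.dist x m := by linarith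
      calc 2 * T.dist x m = T.dist x a + T.dist x b - T.dist a b := this.symm
        _ ≤ _ := le_trans (le_max_left _ _) (le_max_left _ _)
    · have : T.dist x a + T.dist x c - T.dist a c = 2 * T.dist x m := by linarith
      calc 2 * T.dist x m = T.dist x a + T.dist x c - T.dist a c := this.symm
        _ ≤ _ := le_trans (le_max_right _ _) (le_max_left _ _)
    · have : T.dist x b + T.dist x c - T.dist b c = 2 * T.dist x m := by linarith
      calc 2 * T.dist x m = T.dist x b + T.dist x c - T.dist b c := this.symm
        _ ≤ _ := le_max_right _ _
  · apply max_le (max_le (by linarith) (by linarith)) (by linarith)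

lemma adj_iff (u v : T.V) : T.G.Adj u v ↔
    u ≠ v ∧ ∀ z, T.dist u z + T.dist z v = T.dist u v → z = u ∨ z = v := by
  constructor
  · intro h
    refine ⟨h.ne, fun z hz => ?_⟩
    have hm := T.between_iff.mp hz
    rw [T.support_adj h] at hm
    simpa using hm
  · rintro ⟨hne, hz⟩
    set p := T.cpath u v with hp
    have hlen : 0 < p.length := by
      rcases Nat.eq_zero_or_pos p.length with h0 | h0
      · exact absurd ((p.getVert_zero).symm.trans (p.getVert_of_length_le h0.le)) hne
      · exact h0
    set z := p.getVert 1 with hzdef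
    have hadj : T.G.Adj u z := by
      have := p.adj_getVert_succ hlen
      rwa [p.getVert_zero] at this
    have hzs : z ∈ p.support := by
      rw [SimpleGraph.Walk.mem_support_iff_exists_getVert]
      exact ⟨1, rfl, hlen⟩
    have heq : T.dist u z + T.dist z v = T.dist u v := (T.dist_add_of_mem hzs).symm
    rcases hz z heq with h | h
    · exact absurd h hadj.ne'
    · rwa [← h]

lemma eq_of_leaf_dists {u u' : T.V}
    (h : ∀ x, T.IsLeaf x → T.dist x u = T.dist x u') : u = u' := by
  obtain ⟨x, hxl, hx⟩ := T.exists_leaf_branch u' u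
  have : T.dist u' u = 0 := by
    have := h x hxl
    linarith
  exact (T.dist_eq_zero_iff.mp this).symm

end WCubicTree

lemma WCubicTree.exists_matching_vertex (A B : WCubicTree) {L : Type}
    (ℓa : L → A.V) (ℓb : L → B.V)
    (hasurj : ∀ v, A.IsLeaf v → ∃ i, ℓa i = v)
    (hd : ∀ i j, A.dist (ℓa i) (ℓa j) = B.dist (ℓb i) (ℓb j)) (u : A.V) :
    ∃ u' : B.V, ∀ i, B.dist (ℓb i) u' = A.dist (ℓa i) u := by
  obtain ⟨a, b, c, hla, hlb, hlc, e1, e2, e3⟩ := A.exists_leaf_median u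
  obtain ⟨ia, rfl⟩ := hasurj a hla
  obtain ⟨ib, rfl⟩ := hasurj b hlb
  obtain ⟨ic, rfl⟩ := hasurj c hlc
  obtain ⟨m, _, f1, f2, f3⟩ := B.median (ℓb ia) (ℓb ib) (ℓb ic)
  refine ⟨m, fun i => ?_⟩
  have hA := A.two_dist_median (ℓa i) e1 e2 e3
  have hB := B.two_dist_median (ℓb i) f1 f2 f3
  rw [hd i ia, hd i ib, hd i ic, hd ia ib, hd ia ic, hd ib ic] at hA
  linarith

/-- If two weighted cubic trees, with leaves labeled by the same finite set `L`, have equal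
leaf distances, then there is a graph isomorphism between them preserving the leaf labels
and the edge weights. -/
theorem tree_determined_by_leaf_metric
    (T1 T2 : WCubicTree) (L : Type) [Fintype L]
    (ℓ1 : L → T1.V) (ℓ2 : L → T2.V)
    (h1inj : Function.Injective ℓ1) (h2inj : Function.Injective ℓ2)
    (h1leaf : ∀ i, T1.IsLeaf (ℓ1 i)) (h2leaf : ∀ i, T2.IsLeaf (ℓ2 i))
    (h1surj : ∀ v, T1.IsLeaf v → ∃ i, ℓ1 i = v)
    (h2surj : ∀ v, T2.IsLeaf v → ∃ i, ℓ2 i = v)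
    (hdist : ∀ i j, T1.dist (ℓ1 i) (ℓ1 j) = T2.dist (ℓ2 i) (ℓ2 j)) :
    ∃ φ : T1.G ≃g T2.G,
      (∀ i, φ (ℓ1 i) = ℓ2 i) ∧
      ∀ e ∈ T1.G.edgeSet, T2.w (Sym2.map (⇑φ) e) = T1.w e := by
  classical
  have inj1 : ∀ u u' : T1.V, (∀ i, T1.dist (ℓ1 i) u = T1.dist (ℓ1 i) u') → u = u' := by
    intro u u' h
    apply T1.eq_of_leaf_dists
    intro x hx
    obtain ⟨i, rfl⟩ := h1surj x hx
    exact h i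
  have inj2 : ∀ u u' : T2.V, (∀ i, T2.dist (ℓ2 i) u = T2.dist (ℓ2 i) u') → u = u' := by
    intro u u' h
    apply T2.eq_of_leaf_dists
    intro x hx
    obtain ⟨i, rfl⟩ := h2surj x hx
    exact h i
  choose F1 hF1 using T1.exists_matching_vertex T2 ℓ1 ℓ2 h1surj hdist
  choose F2 hF2 using T2.exists_matching_vertex T1 ℓ2 ℓ1 h2surj (fun i j => (hdist i j).symm)
  have hlr : ∀ u, F2 (F1 u) = u := by
    intro u
    apply inj1
    intro i
    rw [hF2 (F1 u) i, hF1 u i]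
  have hrl : ∀ u, F1 (F2 u) = u := by
    intro u
    apply inj2
    intro i
    rw [hF1 (F2 u) i, hF2 u i]
  set e : T1.V ≃ T2.V := ⟨F1, F2, hlr, hrl⟩ with hedef
  have hleafmap : ∀ i, F1 (ℓ1 i) = ℓ2 i := by
    intro i
    apply inj2
    intro j
    rw [hF1 (ℓ1 i) j, hdist j i]
  have hdistF : ∀ u v, T2.dist (F1 u) (F1 v) = T1.dist u v := by
    intro u v
    apply le_antisymm
    · obtain ⟨y, hyl, hy⟩ := T2.exists_leaf_branch (F1 u) (F1 v)
      obtain ⟨j, rfl⟩ := h2surj y hyl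
      have h1 := hF1 v j
      have h2 := hF1 u j
      have tri := T1.dist_triangle (ℓ1 j) u v
      linarith
    · obtain ⟨x, hxl, hx⟩ := T1.exists_leaf_branch u v
      obtain ⟨i, rfl⟩ := h1surj x hxl
      have h1 := hF1 v i
      have h2 := hF1 u i
      have tri := T2.dist_triangle (ℓ2 i) (F1 u) (F1 v)
      linarith
  have hadj : ∀ u v : T1.V, T2.G.Adj (F1 u) (F1 v) ↔ T1.G.Adj u v := by
    intro u v
    rw [T1.adj_iff, T2.adj_iff]
    constructor
    · rintro ⟨hne, hz⟩
      refine ⟨fun h => hne (congrArg F1 h), fun z hzeq => ?_⟩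
      have hzeq' : T2.dist (F1 u) (F1 z) + T2.dist (F1 z) (F1 v) = T2.dist (F1 u) (F1 v) := by
        rw [hdistF, hdistF, hdistF]; exact hzeq
      rcases hz (F1 z) hzeq' with h | h
      · left; exact e.injective h
      · right; exact e.injective h
    · rintro ⟨hne, hz⟩
      refine ⟨fun h => hne (e.injective h), fun z' hzeq => ?_⟩
      have hzeq' : T1.dist u (F2 z') + T1.dist (F2 z') v = T1.dist u v := by
        have := hdistF u (F2 z')
        have := hdistF (F2 z') v
        have h3 := hdistF u v
        rw [hrl z'] at *
        linarith [hzeq]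
      rcases hz (F2 z') hzeq' with h | h
      · left; rw [← hrl z', h]
      · right; rw [← hrl z', h]
  refine ⟨⟨e, @fun u v => hadj u v⟩, fun i => hleafmap i, ?_⟩
  intro ed hed
  induction ed using Sym2.ind with
  | _ u v =>
    have hauv : T1.G.Adj u v := T1.G.mem_edgeSet.mp hed
    have hauv2 : T2.G.Adj (F1 u) (F1 v) := (hadj u v).mpr hauv
    show T2.w (Sym2.map F1 s(u, v)) = T1.w s(u, v)
    calc T2.w (Sym2.map F1 s(u, v)) = T2.w s(F1 u, F1 v) := by rw [Sym2.map_pair_eq]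
      _ = T2.dist (F1 u) (F1 v) := (T2.dist_adj hauv2).symm
      _ = T1.dist u v := hdistF u v
      _ = T1.w s(u, v) := T1.dist_adj hauv
end

section
/- Let n ≥ 1, let v : Fin n → ℝⁿ be a family of linearly independent vectors (hence a basis of ℝⁿ), and let T ∈ ℝⁿ satisfy ⟨v i, T⟩ > 0 for every i. Let C = { Σᵢ βᵢ · v i : βᵢ > 0 for all i } be the open simplicial cone spanned by the v i. Then the integral over C with respect to Lebesgue measure of the function F ↦ exp(−⟨F, T⟩) equals |det M| / Πᵢ ⟨v i, T⟩, where M is the n × n matrix whose i-th row is v i. -/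
open MeasureTheory
open scoped RealInnerProductSpace

theorem aux_integral_exp_neg_mul (c : ℝ) (hc : 0 < c) :
    ∫ x in Set.Ioi (0:ℝ), Real.exp (-(c * x)) = c⁻¹ := by
  have := integral_comp_mul_left_Ioi (fun x => Real.exp (-x)) 0 hc
  simp only [mul_zero] at this
  rw [this, integral_exp_neg_Ioi_zero, smul_eq_mul, mul_one]

/-- The integral of `exp (-⟪F, T⟫)` over the open simplicial cone spanned by a linearly
independent family `v` equals `|det M| / ∏ i, ⟪v i, T⟫`, where `M` has rows `v i`. -/
theorem integral_exp_over_simplicial_cone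
    (n : ℕ) (hn : 1 ≤ n)
    (v : Fin n → EuclideanSpace ℝ (Fin n))
    (hv : LinearIndependent ℝ v)
    (T : EuclideanSpace ℝ (Fin n))
    (hT : ∀ i, 0 < ⟪v i, T⟫) :
    (∫ F in {F : EuclideanSpace ℝ (Fin n) |
        ∃ β : Fin n → ℝ, (∀ i, 0 < β i) ∧ F = ∑ i, β i • v i},
      Real.exp (-⟪F, T⟫))
    = |(Matrix.of fun i j => v i j).det| / ∏ i, ⟪v i, T⟫ := by
  classical
  -- the linear map sending β to ∑ β i • v i
  set Lf : EuclideanSpace ℝ (Fin n) → EuclideanSpace ℝ (Fin n) :=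
    fun β => ∑ i, β i • v i with hLf
  let L : EuclideanSpace ℝ (Fin n) →ₗ[ℝ] EuclideanSpace ℝ (Fin n) :=
    { toFun := Lf
      map_add' := by
        intro a b
        simp only [hLf]
        rw [← Finset.sum_add_distrib]
        refine Finset.sum_congr rfl fun i _ => ?_
        have : (a + b) i = a i + b i := rfl
        rw [this, add_smul]
      map_smul' := by
        intro c a
        simp only [hLf, RingHom.id_apply, Finset.smul_sum]
        refine Finset.sum_congr rfl fun i _ => ?_
        have : (c • a) i = c * a i := rfl
        rw [this, smul_smul] }
  have hLinj : Function.Injective Lf := by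
    intro a b hab
    have h0 : ∑ i, (a i - b i) • v i = 0 := by
      have h1 : ∑ i, (a i - b i) • v i = Lf a - Lf b := by
        simp only [hLf, sub_smul, Finset.sum_sub_distrib]
      rw [h1, hab, sub_self]
    have h2 := Fintype.linearIndependent_iff.1 hv (fun i => a i - b i) h0
    ext i
    have := h2 i
    simpa [sub_eq_zero] using this
  set s : Set (EuclideanSpace ℝ (Fin n)) := {β | ∀ i, 0 < β i} with hs_def
  have hs : MeasurableSet s := by
    have : s = ⋂ i, {β : EuclideanSpace ℝ (Fin n) | 0 < β i} := by
      ext β; simp [hs_def]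
    rw [this]
    refine MeasurableSet.iInter fun i => ?_
    have hm : Measurable (fun β : EuclideanSpace ℝ (Fin n) => β i) :=
      (measurable_pi_apply i).comp (WithLp.measurable_ofLp 2 (Fin n → ℝ))
    exact measurableSet_lt measurable_const hm
  have himg : {F : EuclideanSpace ℝ (Fin n) |
      ∃ β : Fin n → ℝ, (∀ i, 0 < β i) ∧ F = ∑ i, β i • v i} = Lf '' s := by
    ext F
    constructor
    · rintro ⟨β, hβ, rfl⟩
      exact ⟨WithLp.toLp 2 β, hβ, rfl⟩
    · rintro ⟨β, hβ, rfl⟩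
      exact ⟨β, hβ, rfl⟩
  set L' : EuclideanSpace ℝ (Fin n) →L[ℝ] EuclideanSpace ℝ (Fin n) :=
    LinearMap.toContinuousLinearMap L with hL'
  have hder : ∀ x ∈ s, HasFDerivWithinAt Lf L' s x := fun x _ =>
    (L'.hasFDerivAt (x := x)).hasFDerivWithinAt
  rw [himg, integral_image_eq_integral_abs_det_fderiv_smul volume hs
    (f' := fun _ => L') hder hLinj.injOn]
  -- compute the determinant
  have hdet : L'.det = (Matrix.of fun i j => v i j).det := by
    let b := (EuclideanSpace.basisFun (Fin n) ℝ).toBasis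
    show LinearMap.det (L' : EuclideanSpace ℝ (Fin n) →ₗ[ℝ] EuclideanSpace ℝ (Fin n))
      = (Matrix.of fun i j => v i j).det
    rw [← LinearMap.det_toMatrix b]
    have hM : (LinearMap.toMatrix b b) (L' : _ →ₗ[ℝ] _) =
        (Matrix.of fun i j => v i j).transpose := by
      ext i j
      rw [LinearMap.toMatrix_apply]
      have h1 : (L' : EuclideanSpace ℝ (Fin n) →ₗ[ℝ] EuclideanSpace ℝ (Fin n)) (b j)
          = ∑ k, (b j : EuclideanSpace ℝ (Fin n)) k • v k := rfl
      have h2 : ∀ k, (b j : EuclideanSpace ℝ (Fin n)) k = if j = k then (1:ℝ) else 0 := by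
        intro k
        simp [b, EuclideanSpace.basisFun_apply, EuclideanSpace.single_apply, eq_comm]
      have h3 : (b.repr ((L' : EuclideanSpace ℝ (Fin n) →ₗ[ℝ] EuclideanSpace ℝ (Fin n)) (b j))) i
          = ((L' : EuclideanSpace ℝ (Fin n) →ₗ[ℝ] EuclideanSpace ℝ (Fin n)) (b j)) i := by
        simp [b]
      rw [h3, h1]
      have h4 : (∑ k, (b j : EuclideanSpace ℝ (Fin n)) k • v k) i
          = ∑ k, (b j : EuclideanSpace ℝ (Fin n)) k * v k i := by
        rw [WithLp.ofLp_sum, Finset.sum_apply]; rfl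
      rw [h4]
      simp only [h2]
      rw [Finset.sum_eq_single j]
      · simp
      · intro k _ hk
        simp [Ne.symm hk]
      · simp
    rw [hM, Matrix.det_transpose]
  simp only [hdet]
  -- compute the inner product
  have hinner : ∀ β : EuclideanSpace ℝ (Fin n), ⟪Lf β, T⟫ = ∑ i, β i * ⟪v i, T⟫ := by
    intro β
    simp only [hLf]
    rw [sum_inner]
    exact Finset.sum_congr rfl fun i _ => real_inner_smul_left _ _ _
  -- Transfer to the pi volume
  have hmp := EuclideanSpace.volume_preserving_symm_measurableEquiv_toLp (Fin n)
  have hkey : (∫ β in s, |(Matrix.of fun i j => v i j).det| • Real.exp (-⟪Lf β, T⟫))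
      = |(Matrix.of fun i j => v i j).det| *
        ∫ x : Fin n → ℝ, ∏ i, Set.indicator (Set.Ioi (0:ℝ))
          (fun t => Real.exp (-(⟪v i, T⟫ * t))) (x i) := by
    rw [← smul_eq_mul, ← integral_smul]
    rw [← (hmp.symm ((MeasurableEquiv.toLp 2 (Fin n → ℝ)).symm)).setIntegral_preimage_emb
      (MeasurableEquiv.measurableEmbedding _)]
    rw [← integral_indicator (by
      exact hs.preimage (MeasurableEquiv.measurable _))]
    congr 1
    ext x
    by_cases hx : ∀ i, 0 < x i
    · rw [Set.indicator_of_mem]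
      · have hfac : ∀ i, Set.indicator (Set.Ioi (0:ℝ))
            (fun t => Real.exp (-(⟪v i, T⟫ * t))) (x i)
            = Real.exp (-(⟪v i, T⟫ * x i)) := fun i =>
          Set.indicator_of_mem (hx i) _
        simp only [hfac, smul_eq_mul]
        congr 1
        have hβ : ⟪Lf (((MeasurableEquiv.toLp 2 (Fin n → ℝ)).symm).symm x), T⟫
            = ∑ i, x i * ⟪v i, T⟫ := by
          rw [hinner]
          rfl
        rw [hβ, ← Real.exp_sum]
        congr 1
        rw [← Finset.sum_neg_distrib]
        exact Finset.sum_congr rfl fun i _ => by ring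
      · exact fun i => hx i
    · push_neg at hx
      obtain ⟨i, hi⟩ := hx
      have hni : x i ∉ Set.Ioi (0:ℝ) := by simpa using hi
      have hmem : x ∉ ⇑((MeasurableEquiv.toLp 2 (Fin n → ℝ)).symm).symm ⁻¹' s := by
        intro h
        have : (0:ℝ) < x i := h i
        exact absurd this (by simpa using hi)
      rw [Set.indicator_of_notMem hmem,
        Finset.prod_eq_zero (Finset.mem_univ i) (Set.indicator_of_notMem hni _), smul_zero]
  rw [hkey]
  rw [MeasureTheory.integral_fintype_prod_volume_eq_prod (ι := Fin n)
    (f := fun i t => Set.indicator (Set.Ioi (0:ℝ)) (fun t => Real.exp (-(⟪v i, T⟫ * t))) t)]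
  have hfin : ∀ i, (∫ t : ℝ, Set.indicator (Set.Ioi (0:ℝ))
      (fun t => Real.exp (-(⟪v i, T⟫ * t))) t) = (⟪v i, T⟫)⁻¹ := by
    intro i
    rw [integral_indicator measurableSet_Ioi]
    exact aux_integral_exp_neg_mul _ (hT i)
  rw [Finset.prod_congr rfl fun i _ => hfin i]
  rw [Finset.prod_inv_distrib, div_eq_mul_inv]
end

section
/- Let n ≥ 1, let Z : Fin n → ℝⁿ be a basis of ℝⁿ, and let T = Σᵢ λᵢ · Z i with λᵢ > 0 for every i. Let Δ = { F ∈ ℝⁿ : ⟨F, Z i⟩ > 0 for all i }. Then the integral over Δ with respect to Lebesgue measure of F ↦ exp(−⟨F, T⟩) equals |det Z|^{n−1} / Πᵢ |det Zᵢ→T|, where det Z is the determinant of the matrix with rows Z 1, …, Z n, and Zᵢ→T is that matrix with its i-th row replaced by T. -/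
open MeasureTheory Real Set
open scoped RealInnerProductSpace

lemma oneD {b : ℝ} (hb : 0 < b) : ∫ x in Ioi (0:ℝ), Real.exp (-(b*x)) = b⁻¹ := by
  have := integral_comp_mul_left_Ioi (fun x => Real.exp (-x)) 0 hb
  simp only [mul_zero, integral_exp_neg_Ioi, neg_zero, Real.exp_zero, smul_eq_mul, mul_one] at this
  exact this

lemma orthant {n : ℕ} (lam : Fin n → ℝ) (hlam : ∀ i, 0 < lam i) :
    ∫ x in Set.univ.pi (fun _ : Fin n => Ioi (0:ℝ)), ∏ i, Real.exp (-(lam i * x i))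
      = ∏ i, (lam i)⁻¹ := by
  rw [← integral_indicator (MeasurableSet.univ_pi fun _ => measurableSet_Ioi)]
  have : (Set.univ.pi fun _ : Fin n => Ioi (0:ℝ)).indicator
      (fun x => ∏ i, Real.exp (-(lam i * x i)))
      = fun x => ∏ i, (Ioi (0:ℝ)).indicator (fun y => Real.exp (-(lam i * y))) (x i) := by
    funext x
    by_cases hx : x ∈ Set.univ.pi fun _ : Fin n => Ioi (0:ℝ)
    · rw [Set.indicator_of_mem hx]
      exact Finset.prod_congr rfl fun i _ =>
        (Set.indicator_of_mem (hx i (Set.mem_univ i)) (fun y => Real.exp (-(lam i * y)))).symm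
    · rw [Set.indicator_of_notMem hx]
      rw [Set.mem_univ_pi] at hx
      push_neg at hx
      obtain ⟨i, hi⟩ := hx
      exact (Finset.prod_eq_zero (Finset.mem_univ i)
        (by rw [Set.indicator_of_notMem hi])).symm
  rw [this, integral_fintype_prod_volume_eq_prod (f := fun i =>
      (Ioi (0:ℝ)).indicator (fun y => Real.exp (-(lam i * y))))]
  refine Finset.prod_congr rfl fun i _ => ?_
  rw [integral_indicator measurableSet_Ioi, oneD (hlam i)]

/-- For a basis `Z` of `ℝⁿ` and `T = ∑ i, λ i • Z i` with all `λ i > 0`, the integral of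
`exp (-⟪F, T⟫)` over `Δ = {F | ⟪F, Z i⟫ > 0 ∀ i}` equals
`|det Z| ^ (n-1) / ∏ i, |det (Z with i-th row replaced by T)|`. -/
theorem integral_exp_over_dual_cone
    (n : ℕ) (hn : 1 ≤ n)
    (Z : Fin n → EuclideanSpace ℝ (Fin n))
    (hZ : LinearIndependent ℝ Z)
    (lam : Fin n → ℝ) (hlam : ∀ i, 0 < lam i)
    (T : EuclideanSpace ℝ (Fin n)) (hT : T = ∑ i, lam i • Z i) :
    (∫ F in {F : EuclideanSpace ℝ (Fin n) | ∀ i, 0 < ⟪F, Z i⟫},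
      Real.exp (-⟪F, T⟫))
    = |(Matrix.of fun i j => Z i j).det| ^ (n - 1) /
      ∏ i, |((Matrix.of fun i' j => Z i' j).updateRow i (fun j => T j)).det| := by
  set M : Matrix (Fin n) (Fin n) ℝ := Matrix.of fun i j => Z i j with hMdef
  -- determinant nonzero
  have hrows : LinearIndependent ℝ (fun i => M i) :=
    hZ.map' (WithLp.linearEquiv 2 ℝ (Fin n → ℝ)).toLinearMap (LinearEquiv.ker _)
  have hdet : M.det ≠ 0 :=
    ((Matrix.isUnit_iff_isUnit_det _).mp (Matrix.linearIndependent_rows_iff_isUnit.mp hrows)).ne_zero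
  have habs : (0:ℝ) < |M.det| := abs_pos.mpr hdet
  -- rows of updated matrix
  have hTrow : (fun j => T j) = ∑ k, lam k • (M k) := by
    funext j
    have h1 : T j = (WithLp.linearEquiv 2 ℝ (∀ _ : Fin n, ℝ)) T j := rfl
    rw [h1, hT, map_sum, Finset.sum_apply, Finset.sum_apply]
    refine Finset.sum_congr rfl fun k _ => ?_
    rw [_root_.map_smul]
    rfl
  have hupdet : ∀ i, (M.updateRow i (fun j => T j)).det = lam i * M.det := by
    intro i
    rw [hTrow, Matrix.det_updateRow_sum M i lam, smul_eq_mul]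
  -- RHS simplification
  have hRHS : ∏ i, |(M.updateRow i (fun j => T j)).det| = (∏ i, lam i) * |M.det| ^ n := by
    calc ∏ i, |(M.updateRow i (fun j => T j)).det| = ∏ i, lam i * |M.det| := by
          refine Finset.prod_congr rfl fun i _ => ?_
          rw [hupdet i, abs_mul, abs_of_pos (hlam i)]
      _ = (∏ i, lam i) * |M.det| ^ n := by
          rw [Finset.prod_mul_distrib, Finset.prod_const, Finset.card_univ, Fintype.card_fin]
  -- the linear map
  set φ : (EuclideanSpace ℝ (Fin n)) →ₗ[ℝ] EuclideanSpace ℝ (Fin n) := Matrix.toEuclideanLin M with hφdef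
  have hφdet : LinearMap.det φ = M.det :=
    LinearMap.det_toLin (EuclideanSpace.basisFun (Fin n) ℝ).toBasis M
  have hφcont : Continuous φ := φ.continuous_of_finiteDimensional
  have hφmeas : Measurable φ := hφcont.measurable
  have hinner : ∀ (F : EuclideanSpace ℝ (Fin n)) (i : Fin n), ⟪F, Z i⟫ = φ F i := by
    intro F i
    show ⟪F, Z i⟫ = M.mulVec (WithLp.ofLp F) i
    rw [PiLp.inner_apply, Matrix.mulVec]
    simp only [dotProduct, RCLike.inner_apply, starRingEnd_apply, star_trivial]
    exact Finset.sum_congr rfl fun j _ => rfl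
  have hφT : ∀ F : EuclideanSpace ℝ (Fin n), ⟪F, T⟫ = ∑ i, lam i * (φ F i) := by
    intro F
    rw [hT, inner_sum]
    exact Finset.sum_congr rfl fun i _ => by rw [real_inner_smul_right, hinner]
  -- the target set
  set Q : Set (EuclideanSpace ℝ (Fin n)) := {y | ∀ i, 0 < y i} with hQdef
  have hQmeas : MeasurableSet Q := by
    have : Q = ⋂ i, {y : EuclideanSpace ℝ (Fin n) | 0 < y i} := by
      ext y; simp [hQdef, Set.mem_iInter]
    rw [this]
    exact MeasurableSet.iInter fun i =>
      measurableSet_lt measurable_const (EuclideanSpace.proj (𝕜 := ℝ) i).continuous.measurable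
  have hsetEq : {F : EuclideanSpace ℝ (Fin n) | ∀ i, 0 < ⟪F, Z i⟫} = φ ⁻¹' Q := by
    ext F
    simp only [Set.mem_setOf_eq, Set.mem_preimage, hQdef]
    exact forall_congr' fun i => by rw [hinner]
  -- the function g
  set g : EuclideanSpace ℝ (Fin n) → ℝ := fun y => Real.exp (-(∑ i, lam i * y i)) with hgdef
  have hgcont : Continuous g := by
    apply Real.continuous_exp.comp
    apply Continuous.neg
    exact continuous_finset_sum _ fun i _ =>
      (continuous_const.mul (EuclideanSpace.proj (𝕜 := ℝ) i).continuous)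
  have hint : (∫ F in {F : EuclideanSpace ℝ (Fin n) | ∀ i, 0 < ⟪F, Z i⟫},
      Real.exp (-⟪F, T⟫)) = ∫ F in φ ⁻¹' Q, g (φ F) := by
    rw [hsetEq]
    refine setIntegral_congr_fun (hQmeas.preimage hφmeas) fun F _ => ?_
    rw [hφT F]
  rw [hint]
  -- change of variables
  have hmap : Measure.map φ volume = ENNReal.ofReal |M.det|⁻¹ • volume := by
    have h := Measure.map_linearMap_addHaar_eq_smul_addHaar volume
      (f := φ) (by rw [hφdet]; exact hdet)
    rwa [abs_inv, hφdet] at h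
  have step1 : (∫ F in φ ⁻¹' Q, g (φ F)) = ∫ y in Q, g y ∂(Measure.map φ volume) := by
    rw [Measure.restrict_map hφmeas hQmeas,
      integral_map hφmeas.aemeasurable hgcont.aestronglyMeasurable]
  rw [step1, hmap, Measure.restrict_smul, integral_smul_measure,
    ENNReal.toReal_ofReal (by positivity)]
  -- transfer to pi space
  have hpres : MeasurePreserving (MeasurableEquiv.toLp 2 (Fin n → ℝ))
      volume volume := (EuclideanSpace.volume_preserving_symm_measurableEquiv_toLp (Fin n)).symm
  have step2 : (∫ y in Q, g y) =
      ∫ x in Set.univ.pi (fun _ : Fin n => Ioi (0:ℝ)), ∏ i, Real.exp (-(lam i * x i)) := by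
    rw [← hpres.setIntegral_preimage_emb
      (MeasurableEquiv.toLp 2 (Fin n → ℝ)).measurableEmbedding g Q]
    have hpre : (MeasurableEquiv.toLp 2 (Fin n → ℝ)) ⁻¹' Q
        = Set.univ.pi (fun _ : Fin n => Ioi (0:ℝ)) := by
      ext x
      exact ⟨fun h i _ => h i, fun h i => h i (Set.mem_univ i)⟩
    rw [hpre]
    refine setIntegral_congr_fun (MeasurableSet.univ_pi fun _ => measurableSet_Ioi)
      fun x _ => ?_
    show Real.exp (-(∑ i, lam i * x i)) = _
    rw [← Finset.sum_neg_distrib, Real.exp_sum]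
  rw [step2, orthant lam hlam, hRHS]
  -- final arithmetic
  have hprodlam : (0:ℝ) < ∏ i, lam i := Finset.prod_pos fun i _ => hlam i
  obtain ⟨m, rfl⟩ : ∃ m, n = m + 1 := ⟨n - 1, (Nat.succ_pred_eq_of_pos hn).symm⟩
  simp only [Nat.add_sub_cancel, pow_succ]
  rw [Finset.prod_inv_distrib]
  field_simp
  rw [smul_eq_mul, div_mul_div_comm, one_mul, mul_one_div, div_self (by positivity)]
end

section
/- In ℝ⁴ with coordinates (x, y, z, w), let Δ = { (x, y, z, w) : x ≥ 0, y ≥ 0, z ≥ 0, w ≥ 0, y − z + w ≥ 0, x − z + w ≥ 0 }, and set V0 = (0,0,1,1), V1 = (1,0,0,0), V2 = (1,1,1,0), V3 = (0,1,0,0), V4 = (0,0,0,1). Then Δ ∩ { z ≥ w } = { α·V0 + β·V1 + γ·V2 + δ·V3 : α, β, γ, δ ≥ 0 } and Δ ∩ { z ≤ w } = { α·V0 + β·V1 + δ·V3 + ε·V4 : α, β, δ, ε ≥ 0 }; in particular, Δ is the union of these two simplicial cones, whose intersection is contained in the hyperplane { z = w }. -/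
/-- The cone of compatible metrics of the bipyramid collection for (3,6):
coordinates `(x, y, z, w) = (p 0, p 1, p 2, p 3)`, with the positivity conditions for the
dependent internal lengths `u = x + w - z` and `v = y + w - z`. -/
def bipDelta : Set (Fin 4 → ℝ) :=
  {p | 0 ≤ p 0 ∧ 0 ≤ p 1 ∧ 0 ≤ p 2 ∧ 0 ≤ p 3 ∧ 0 ≤ p 1 - p 2 + p 3 ∧ 0 ≤ p 0 - p 2 + p 3}

def bipV0 : Fin 4 → ℝ := ![0, 0, 1, 1]
def bipV1 : Fin 4 → ℝ := ![1, 0, 0, 0]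
def bipV2 : Fin 4 → ℝ := ![1, 1, 1, 0]
def bipV3 : Fin 4 → ℝ := ![0, 1, 0, 0]
def bipV4 : Fin 4 → ℝ := ![0, 0, 0, 1]

/-- The simplicial cone spanned (with nonnegative coefficients) by `V0, V1, V2, V3`. -/
def bipCone1 : Set (Fin 4 → ℝ) :=
  {q | ∃ α β γ δ : ℝ, 0 ≤ α ∧ 0 ≤ β ∧ 0 ≤ γ ∧ 0 ≤ δ ∧
    q = α • bipV0 + β • bipV1 + γ • bipV2 + δ • bipV3}

/-- The simplicial cone spanned (with nonnegative coefficients) by `V0, V1, V3, V4`. -/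
def bipCone2 : Set (Fin 4 → ℝ) :=
  {q | ∃ α β δ ε : ℝ, 0 ≤ α ∧ 0 ≤ β ∧ 0 ≤ δ ∧ 0 ≤ ε ∧
    q = α • bipV0 + β • bipV1 + δ • bipV3 + ε • bipV4}

lemma bipCone1_eq :
    bipDelta ∩ {p | p 3 ≤ p 2} = bipCone1 := by
  ext p
  constructor
  · rintro ⟨⟨hx, hy, hz, hw, hv, hu⟩, (hzw : p 3 ≤ p 2)⟩
    refine ⟨p 3, p 0 - p 2 + p 3, p 2 - p 3, p 1 - p 2 + p 3, hw, hu, by linarith, hv, ?_⟩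
    funext i
    fin_cases i <;>
      simp [bipV0, bipV1, bipV2, bipV3] <;> ring
  · rintro ⟨α, β, γ, δ, hα, hβ, hγ, hδ, rfl⟩
    have h0 : ∀ i : Fin 4,
        (α • bipV0 + β • bipV1 + γ • bipV2 + δ • bipV3) i
          = α * bipV0 i + β * bipV1 i + γ * bipV2 i + δ * bipV3 i := by
      intro i; simp [mul_comm]
    refine ⟨⟨?_, ?_, ?_, ?_, ?_, ?_⟩, ?_⟩ <;>
      simp only [Set.mem_setOf_eq, h0, bipV0, bipV1, bipV2, bipV3] <;>
      simp <;> linarith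

lemma bipCone2_eq :
    bipDelta ∩ {p | p 2 ≤ p 3} = bipCone2 := by
  ext p
  constructor
  · rintro ⟨⟨hx, hy, hz, hw, hv, hu⟩, (hzw : p 2 ≤ p 3)⟩
    refine ⟨p 2, p 0, p 1, p 3 - p 2, hz, hx, hy, by linarith, ?_⟩
    funext i
    fin_cases i <;>
      simp [bipV0, bipV1, bipV3, bipV4] <;> ring
  · rintro ⟨α, β, δ, ε, hα, hβ, hδ, hε, rfl⟩
    have h0 : ∀ i : Fin 4,
        (α • bipV0 + β • bipV1 + δ • bipV3 + ε • bipV4) i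
          = α * bipV0 i + β * bipV1 i + δ * bipV3 i + ε * bipV4 i := by
      intro i; simp [mul_comm]
    refine ⟨⟨?_, ?_, ?_, ?_, ?_, ?_⟩, ?_⟩ <;>
      simp only [Set.mem_setOf_eq, h0, bipV0, bipV1, bipV3, bipV4] <;>
      simp <;> linarith

/-- `Δ ∩ {z ≥ w}` and `Δ ∩ {z ≤ w}` are the two simplicial cones of the triangulation of
the bipyramid; in particular `Δ` is their union and their intersection lies in `{z = w}`. -/
theorem bipyramid_triangulation :
    bipDelta ∩ {p | p 3 ≤ p 2} = bipCone1 ∧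
    bipDelta ∩ {p | p 2 ≤ p 3} = bipCone2 ∧
    bipDelta = bipCone1 ∪ bipCone2 ∧
    bipCone1 ∩ bipCone2 ⊆ {p | p 2 = p 3} := by
  refine ⟨bipCone1_eq, bipCone2_eq, ?_, ?_⟩
  · ext p
    constructor
    · intro hp
      rcases le_total (p 3) (p 2) with h | h
      · exact Or.inl (bipCone1_eq ▸ ⟨hp, h⟩)
      · exact Or.inr (bipCone2_eq ▸ ⟨hp, h⟩)
    · rintro (h | h)
      · exact ((bipCone1_eq ▸ h : p ∈ bipDelta ∩ _)).1
      · exact ((bipCone2_eq ▸ h : p ∈ bipDelta ∩ _)).1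
  · intro p hp
    have h1 : p ∈ bipDelta ∩ {p | p 3 ≤ p 2} := bipCone1_eq ▸ hp.1
    have h2 : p ∈ bipDelta ∩ {p | p 2 ≤ p 3} := bipCone2_eq ▸ hp.2
    exact le_antisymm h2.2 h1.2
end

section
/- Let a, b, c, d be real numbers with a > 0, b > 0, d > 0, c + d > 0 and a + b + c > 0. Then the integral over the open cone { (x, y, z, w) ∈ ℝ⁴ : x > 0, y > 0, z > 0, w > 0, y − z + w > 0, x − z + w > 0 } of the function (x, y, z, w) ↦ exp(−(a·x + b·y + c·z + d·w)) with respect to Lebesgue measure equals 1/(a·b·(a + b + c)·(c + d)) + 1/(a·b·d·(c + d)). -/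
open MeasureTheory Set

namespace BipyramidAux

noncomputable section

def O : Set (Fin 4 → ℝ) := {q | ∀ i, 0 < q i}

lemma measurableSet_O : MeasurableSet O := by
  have : O = Set.pi univ (fun _ : Fin 4 => Ioi (0:ℝ)) := by
    ext q; simp [O, Set.mem_pi]
  rw [this]
  exact MeasurableSet.univ_pi fun i => measurableSet_Ioi

lemma exp_integral_Ioi (r : ℝ) (hr : 0 < r) :
    ∫ x in Ioi (0:ℝ), Real.exp (-(r * x)) = r⁻¹ := by
  have h := integral_comp_mul_left_Ioi (fun y => Real.exp (-y)) 0 hr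
  simp only [mul_zero, integral_exp_neg_Ioi, neg_zero, Real.exp_zero, smul_eq_mul, mul_one] at h
  exact h

lemma indicator_eq (l : Fin 4 → ℝ) (q : Fin 4 → ℝ) :
    O.indicator (fun q => Real.exp (-(∑ i, l i * q i))) q
      = ∏ i, (Ioi (0:ℝ)).indicator (fun x => Real.exp (-(l i * x))) (q i) := by
  by_cases h : q ∈ O
  · rw [Set.indicator_of_mem h]
    have : ∀ i ∈ Finset.univ, (Ioi (0:ℝ)).indicator
        (fun x => Real.exp (-(l i * x))) (q i) = Real.exp (-(l i * q i)) :=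
      fun i _ => Set.indicator_of_mem (h i) _
    rw [Finset.prod_congr rfl this, ← Real.exp_sum]
    congr 1
    rw [← Finset.sum_neg_distrib]
  · rw [Set.indicator_of_notMem h]
    have : ∃ i, ¬ (0 < q i) := by simpa [O] using h
    obtain ⟨i, hi⟩ := this
    refine (Finset.prod_eq_zero (Finset.mem_univ i) ?_).symm
    exact Set.indicator_of_notMem (by simpa using hi) _

lemma orthant_integral (l : Fin 4 → ℝ) (hl : ∀ i, 0 < l i) :
    ∫ q in O, Real.exp (-(∑ i, l i * q i)) = ∏ i, (l i)⁻¹ := by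
  rw [← integral_indicator measurableSet_O]
  rw [show (fun q => O.indicator (fun q => Real.exp (-(∑ i, l i * q i))) q)
      = fun q => ∏ i, (Ioi (0:ℝ)).indicator (fun x => Real.exp (-(l i * x))) (q i)
    from funext (indicator_eq l)]
  rw [MeasureTheory.integral_fintype_prod_volume_eq_prod (ι := Fin 4)
    (fun i => (Ioi (0:ℝ)).indicator (fun x => Real.exp (-(l i * x))))]
  refine Finset.prod_congr rfl fun i _ => ?_
  rw [integral_indicator measurableSet_Ioi, exp_integral_Ioi _ (hl i)]

lemma orthant_integrable (l : Fin 4 → ℝ) (hl : ∀ i, 0 < l i) :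
    IntegrableOn (fun q : Fin 4 → ℝ => Real.exp (-(∑ i, l i * q i))) O := by
  rw [← integrable_indicator_iff measurableSet_O]
  rw [show O.indicator (fun q => Real.exp (-(∑ i, l i * q i)))
      = fun q => ∏ i, (Ioi (0:ℝ)).indicator (fun x => Real.exp (-(l i * x))) (q i)
    from funext (indicator_eq l)]
  apply Integrable.fintype_prod
  intro i
  rw [integrable_indicator_iff measurableSet_Ioi]
  simpa [neg_mul] using exp_neg_integrableOn_Ioi 0 (hl i)

lemma shear_mp (M : Matrix (Fin 4) (Fin 4) ℝ) (hdet : M.det = 1)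
    (hinj : Function.Injective (Matrix.toLin' M)) :
    MeasurePreserving (Matrix.toLin' M) volume volume ∧
      MeasurableEmbedding (Matrix.toLin' M) := by
  have hcont : Continuous (Matrix.toLin' M) := LinearMap.continuous_on_pi _
  refine ⟨⟨hcont.measurable, ?_⟩, hcont.measurableEmbedding hinj⟩
  rw [Real.map_matrix_volume_pi_eq_smul_volume_pi (by rw [hdet]; norm_num), hdet]
  norm_num

lemma region_eval (M : Matrix (Fin 4) (Fin 4) ℝ) (hdet : M.det = 1)
    (hinj : Function.Injective (Matrix.toLin' M))
    (g : (Fin 4 → ℝ) → ℝ) (l : Fin 4 → ℝ) (hl : ∀ i, 0 < l i)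
    (hg : ∀ q ∈ O, g (Matrix.toLin' M q) = Real.exp (-(∑ i, l i * q i))) :
    (∫ p in Matrix.toLin' M '' O, g p) = ∏ i, (l i)⁻¹ ∧
      IntegrableOn g (Matrix.toLin' M '' O) := by
  obtain ⟨hmp, hemb⟩ := shear_mp M hdet hinj
  constructor
  · rw [hmp.setIntegral_image_emb hemb]
    rw [setIntegral_congr_fun measurableSet_O hg]
    exact orthant_integral l hl
  · have h2 := (hmp.restrict_image_emb hemb O).integrable_comp_emb hemb
      (g := g)
    exact h2.mp (((orthant_integrable l hl).congr_fun
      (fun q hq => (hg q hq).symm) measurableSet_O))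

end

end BipyramidAux

namespace BipyramidAux

noncomputable section

def M1 : Matrix (Fin 4) (Fin 4) ℝ := !![1,0,0,0; 0,1,0,0; 0,0,1,0; 0,0,1,1]
def M2 : Matrix (Fin 4) (Fin 4) ℝ := !![1,0,1,0; 0,1,1,0; 0,0,1,1; 0,0,0,1]

lemma M1_apply (q : Fin 4 → ℝ) :
    Matrix.toLin' M1 q = ![q 0, q 1, q 2, q 2 + q 3] := by
  funext j; fin_cases j <;>
    simp [M1, Matrix.toLin'_apply, Matrix.mulVec, dotProduct, Fin.sum_univ_four]

lemma M2_apply (q : Fin 4 → ℝ) :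
    Matrix.toLin' M2 q = ![q 0 + q 2, q 1 + q 2, q 2 + q 3, q 3] := by
  funext j; fin_cases j <;>
    simp [M2, Matrix.toLin'_apply, Matrix.mulVec, dotProduct, Fin.sum_univ_four]

lemma M1_det : M1.det = 1 := by simp [M1, Matrix.det_succ_row_zero, Fin.sum_univ_succ]
lemma M2_det : M2.det = 1 := by simp [M2, Matrix.det_succ_row_zero, Fin.sum_univ_succ]

lemma M1_inj : Function.Injective (Matrix.toLin' M1) := by
  have : Function.LeftInverse (fun p : Fin 4 → ℝ => ![p 0, p 1, p 2, p 3 - p 2])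
      (Matrix.toLin' M1) := by
    intro q
    rw [M1_apply]
    funext j
    fin_cases j <;> simp <;> ring
  exact this.injective

lemma M2_inj : Function.Injective (Matrix.toLin' M2) := by
  have : Function.LeftInverse (fun p : Fin 4 → ℝ => ![p 0 - p 2 + p 3, p 1 - p 2 + p 3, p 2 - p 3, p 3])
      (Matrix.toLin' M2) := by
    intro q
    rw [M2_apply]
    funext j
    fin_cases j <;> simp <;> ring
  exact this.injective

def S1 : Set (Fin 4 → ℝ) := {p | 0 < p 0 ∧ 0 < p 1 ∧ 0 < p 2 ∧ p 2 < p 3}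
def S2 : Set (Fin 4 → ℝ) := {p | 0 < p 3 ∧ p 3 < p 2 ∧ p 2 - p 3 < p 0 ∧ p 2 - p 3 < p 1}

lemma M1_image : Matrix.toLin' M1 '' O = S1 := by
  ext p
  constructor
  · rintro ⟨q, hq, rfl⟩
    rw [M1_apply]
    have h0 := hq 0; have h1 := hq 1; have h2 := hq 2; have h3 := hq 3
    refine ⟨by simpa using h0, by simpa using h1, by simpa using h2, ?_⟩
    simp only [Matrix.cons_val_two, Matrix.cons_val_three, Matrix.head_cons, Matrix.tail_cons,
      Matrix.head_fin_const]
    linarith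
  · rintro ⟨h0, h1, h2, h3⟩
    refine ⟨![p 0, p 1, p 2, p 3 - p 2], ?_, ?_⟩
    · intro i; fin_cases i <;> simp <;> linarith
    · rw [M1_apply]
      funext j; fin_cases j <;> simp <;> ring

lemma M2_image : Matrix.toLin' M2 '' O = S2 := by
  ext p
  constructor
  · rintro ⟨q, hq, rfl⟩
    rw [M2_apply]
    have h0 := hq 0; have h1 := hq 1; have h2 := hq 2; have h3 := hq 3
    simp only [S2, Set.mem_setOf_eq, Matrix.cons_val_zero, Matrix.cons_val_one, Matrix.head_cons,
      Matrix.cons_val_two, Matrix.cons_val_three, Matrix.tail_cons, Matrix.head_fin_const]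
    refine ⟨by simpa using h3, by linarith, by linarith, by linarith⟩
  · rintro ⟨h0, h1, h2, h3⟩
    refine ⟨![p 0 - p 2 + p 3, p 1 - p 2 + p 3, p 2 - p 3, p 3], ?_, ?_⟩
    · intro i; fin_cases i <;> simp <;> linarith
    · rw [M2_apply]
      funext j; fin_cases j <;> simp <;> ring

end

end BipyramidAux

namespace BipyramidAux

lemma hyperplane_null : volume {p : Fin 4 → ℝ | p 2 = p 3} = 0 := by
  let L : (Fin 4 → ℝ) →ₗ[ℝ] ℝ := (LinearMap.proj 2 : (Fin 4 → ℝ) →ₗ[ℝ] ℝ) - (LinearMap.proj 3 : (Fin 4 → ℝ) →ₗ[ℝ] ℝ)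
  have hset : {p : Fin 4 → ℝ | p 2 = p 3} = (LinearMap.ker L : Set (Fin 4 → ℝ)) := by
    ext p
    simp [L, LinearMap.mem_ker, sub_eq_zero]
  rw [hset]
  refine Measure.addHaar_submodule volume _ ?_
  intro h
  have hmem : (Pi.single 2 1 : Fin 4 → ℝ) ∈ LinearMap.ker L := h ▸ Submodule.mem_top
  have := LinearMap.mem_ker.mp hmem
  simp [L, Pi.single_apply] at this

lemma S2_measurable : MeasurableSet S2 := by
  have : S2 = {p : Fin 4 → ℝ | 0 < p 3} ∩ ({p | p 3 < p 2} ∩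
      ({p | p 2 - p 3 < p 0} ∩ {p | p 2 - p 3 < p 1})) := by
    ext p; simp [S2, and_assoc]
  rw [this]
  exact (measurableSet_lt measurable_const (measurable_pi_apply 3)).inter
    ((measurableSet_lt (measurable_pi_apply 3) (measurable_pi_apply 2)).inter
      ((measurableSet_lt ((measurable_pi_apply 2).sub (measurable_pi_apply 3))
        (measurable_pi_apply 0)).inter
        (measurableSet_lt ((measurable_pi_apply 2).sub (measurable_pi_apply 3))
          (measurable_pi_apply 1))))

end BipyramidAux

open BipyramidAux

/-- The contribution of the bipyramid collection to the (3,6) generalized biadjoint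
amplitude: the integral of `exp (-(a x + b y + c z + d w))` over the open cone of
compatible metrics equals `1/(a b (a+b+c)(c+d)) + 1/(a b d (c+d))`. -/
theorem bipyramid_amplitude
    (a b c d : ℝ) (ha : 0 < a) (hb : 0 < b) (hd : 0 < d)
    (hcd : 0 < c + d) (habc : 0 < a + b + c) :
    (∫ p in {p : Fin 4 → ℝ | 0 < p 0 ∧ 0 < p 1 ∧ 0 < p 2 ∧ 0 < p 3 ∧
        0 < p 1 - p 2 + p 3 ∧ 0 < p 0 - p 2 + p 3},
      Real.exp (-(a * p 0 + b * p 1 + c * p 2 + d * p 3)))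
    = 1 / (a * b * (a + b + c) * (c + d)) + 1 / (a * b * d * (c + d)) := by
  set g : (Fin 4 → ℝ) → ℝ :=
    fun p => Real.exp (-(a * p 0 + b * p 1 + c * p 2 + d * p 3)) with hgdef
  set S : Set (Fin 4 → ℝ) := {p : Fin 4 → ℝ | 0 < p 0 ∧ 0 < p 1 ∧ 0 < p 2 ∧ 0 < p 3 ∧
      0 < p 1 - p 2 + p 3 ∧ 0 < p 0 - p 2 + p 3} with hSdef
  -- region 1
  have hl1 : ∀ i, 0 < (![a, b, c + d, d]) i := by
    intro i; fin_cases i <;> simpa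
  have hg1 : ∀ q ∈ O, g (Matrix.toLin' M1 q)
      = Real.exp (-(∑ i, (![a, b, c + d, d]) i * q i)) := by
    intro q _
    rw [M1_apply, hgdef]
    simp only [Fin.sum_univ_four, Matrix.cons_val_zero, Matrix.cons_val_one,
      Matrix.head_cons, Matrix.cons_val_two, Matrix.cons_val_three, Matrix.tail_cons,
      Matrix.head_fin_const]
    congr 1
    ring
  have key1 := region_eval M1 M1_det M1_inj g _ hl1 hg1
  rw [M1_image] at key1
  -- region 2
  have hl2 : ∀ i, 0 < (![a, b, a + b + c, c + d]) i := by
    intro i; fin_cases i <;> simpa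
  have hg2 : ∀ q ∈ O, g (Matrix.toLin' M2 q)
      = Real.exp (-(∑ i, (![a, b, a + b + c, c + d]) i * q i)) := by
    intro q _
    rw [M2_apply, hgdef]
    simp only [Fin.sum_univ_four, Matrix.cons_val_zero, Matrix.cons_val_one,
      Matrix.head_cons, Matrix.cons_val_two, Matrix.cons_val_three, Matrix.tail_cons,
      Matrix.head_fin_const]
    congr 1
    ring
  have key2 := region_eval M2 M2_det M2_inj g _ hl2 hg2
  rw [M2_image] at key2
  -- S is a.e. equal to S1 ∪ S2
  have hsub1 : S1 ⊆ S := by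
    rintro p ⟨h0, h1, h2, h3⟩
    exact ⟨h0, h1, h2, lt_trans h2 h3, by linarith, by linarith⟩
  have hsub2 : S2 ⊆ S := by
    rintro p ⟨h0, h1, h2, h3⟩
    exact ⟨by linarith, by linarith, by linarith, h0, by linarith, by linarith⟩
  have hae : S =ᵐ[volume] ((S1 ∪ S2 : Set (Fin 4 → ℝ))) := by
    rw [← measure_symmDiff_eq_zero_iff]
    refine measure_mono_null ?_ hyperplane_null
    intro p hp
    rw [Set.mem_symmDiff] at hp
    rcases hp with ⟨hpS, hpT⟩ | ⟨hpT, hpS⟩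
    · rcases lt_trichotomy (p 2) (p 3) with h | h | h
      · exact absurd (Or.inl ⟨hpS.1, hpS.2.1, hpS.2.2.1, h⟩) hpT
      · exact h
      · obtain ⟨h0, h1, h2, h3, h4, h5⟩ := hpS
        exact absurd (Or.inr ⟨h3, h, by linarith, by linarith⟩) hpT
    · rcases hpT with h | h
      · exact absurd (hsub1 h) hpS
      · exact absurd (hsub2 h) hpS
  have hdisj : Disjoint S1 S2 := by
    rw [Set.disjoint_left]
    rintro p ⟨_, _, _, h3⟩ ⟨_, h2, _, _⟩
    linarith
  rw [setIntegral_congr_set hae,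
    setIntegral_union hdisj S2_measurable key1.2 key2.2, key1.1, key2.1,
    Fin.prod_univ_four, Fin.prod_univ_four]
  simp only [Matrix.cons_val_zero, Matrix.cons_val_one, Matrix.head_cons,
    Matrix.cons_val_two, Matrix.cons_val_three, Matrix.tail_cons, Matrix.head_fin_const]
  field_simp
  ring
end

section
/- Let n ≥ 1, let T ∈ ℝⁿ, and suppose a set Δ ⊆ ℝⁿ is the union of finitely many open simplicial cones C r (r ranging over a finite index set), where C r is spanned with positive coefficients by a basis vʳ : Fin n → ℝⁿ of ℝⁿ, the cones C r are pairwise disjoint, the difference Δ \ (⋃ᵣ C r) has Lebesgue measure zero, and ⟨vʳ i, T⟩ > 0 for all r and i. Then the integral over Δ of F ↦ exp(−⟨F, T⟩) with respect to Lebesgue measure equals Σᵣ |det Mʳ| / Πᵢ ⟨vʳ i, T⟩, where Mʳ is the matrix whose rows are the vectors vʳ i. -/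
open MeasureTheory
open scoped RealInnerProductSpace

section ConeAux
open Set

lemma orthant_indicator (n : ℕ) (c : Fin n → ℝ) :
    (Set.pi Set.univ (fun _ : Fin n => Set.Ioi (0:ℝ))).indicator
      (fun y => ∏ i, Real.exp (-(c i * y i)))
      = fun y => ∏ i, (Set.Ioi (0:ℝ)).indicator (fun t => Real.exp (-(c i * t))) (y i) := by
  funext y
  by_cases h : y ∈ Set.pi Set.univ (fun _ : Fin n => Set.Ioi (0:ℝ))
  · rw [Set.indicator_of_mem h]
    refine Finset.prod_congr rfl fun i _ => ?_
    rw [Set.indicator_of_mem (h i (Set.mem_univ i))]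
  · rw [Set.indicator_of_notMem h]
    rw [Set.mem_pi] at h
    push_neg at h
    obtain ⟨i, _, hi⟩ := h
    exact (Finset.prod_eq_zero (Finset.mem_univ i)
      (by rw [Set.indicator_of_notMem hi])).symm

lemma orthant_integrable (n : ℕ) (c : Fin n → ℝ) (hc : ∀ i, 0 < c i) :
    IntegrableOn (fun y : Fin n → ℝ => ∏ i, Real.exp (-(c i * y i)))
      (Set.pi Set.univ (fun _ : Fin n => Set.Ioi (0:ℝ))) := by
  rw [← integrable_indicator_iff
    (MeasurableSet.univ_pi fun _ => measurableSet_Ioi), orthant_indicator]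
  exact Integrable.fintype_prod (f := fun i =>
    (Set.Ioi (0:ℝ)).indicator (fun t => Real.exp (-(c i * t)))) fun i => by
      rw [integrable_indicator_iff measurableSet_Ioi]
      simpa only [neg_mul] using exp_neg_integrableOn_Ioi 0 (hc i)

lemma orthant_integral (n : ℕ) (c : Fin n → ℝ) (hc : ∀ i, 0 < c i) :
    (∫ y in Set.pi Set.univ (fun _ : Fin n => Set.Ioi (0:ℝ)),
        ∏ i, Real.exp (-(c i * y i))) = ∏ i, (c i)⁻¹ := by
  rw [← integral_indicator (MeasurableSet.univ_pi fun _ => measurableSet_Ioi),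
    orthant_indicator]
  simp only [MeasureTheory.volume_pi]
  rw [MeasureTheory.integral_fintype_prod_eq_prod
      (fun i => (Set.Ioi (0:ℝ)).indicator (fun t => Real.exp (-(c i * t))))]
  refine Finset.prod_congr rfl fun i _ => ?_
  rw [integral_indicator measurableSet_Ioi]
  have := integral_comp_mul_left_Ioi (fun x => Real.exp (-x)) 0 (hc i)
  simp only [mul_zero] at this
  rw [this, integral_exp_neg_Ioi_zero, smul_eq_mul, mul_one]

noncomputable def coneMap (n : ℕ) (w : Fin n → EuclideanSpace ℝ (Fin n)) :
    EuclideanSpace ℝ (Fin n) →ₗ[ℝ] EuclideanSpace ℝ (Fin n) where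
  toFun β := ∑ i, β i • w i
  map_add' β γ := by
    simp only [PiLp.add_apply, add_smul, Finset.sum_add_distrib]
  map_smul' t β := by
    simp only [PiLp.smul_apply, smul_eq_mul, RingHom.id_apply, Finset.smul_sum, smul_smul]

lemma coneMap_injective (n : ℕ) (w : Fin n → EuclideanSpace ℝ (Fin n))
    (hw : LinearIndependent ℝ w) : Function.Injective (coneMap n w) := by
  rw [← LinearMap.ker_eq_bot, LinearMap.ker_eq_bot']
  intro β hβ
  have h := Fintype.linearIndependent_iff.mp hw (fun i => β i) hβ
  ext i
  exact h i

lemma coneMap_det (n : ℕ) (w : Fin n → EuclideanSpace ℝ (Fin n)) :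
    LinearMap.det (coneMap n w) = (Matrix.of fun i j => w i j).det := by
  classical
  let b := (EuclideanSpace.basisFun (Fin n) ℝ).toBasis
  rw [← LinearMap.det_toMatrix b, ← Matrix.det_transpose]
  congr 1
  ext i j
  simp only [Matrix.transpose_apply, Matrix.of_apply, LinearMap.toMatrix_apply]
  have hb : (coneMap n w) (b i) = w i := by
    simp only [coneMap, LinearMap.coe_mk, AddHom.coe_mk, b,
      OrthonormalBasis.coe_toBasis, EuclideanSpace.basisFun_apply]
    rw [Finset.sum_eq_single i]
    · rw [EuclideanSpace.single_apply, if_pos rfl, one_smul]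
    · intro k _ hk
      rw [EuclideanSpace.single_apply, if_neg hk, zero_smul]
    · intro h; exact absurd (Finset.mem_univ i) h
  rw [hb]
  rfl

lemma orthantE_isOpen (n : ℕ) :
    IsOpen {β : EuclideanSpace ℝ (Fin n) | ∀ i, 0 < β i} := by
  have : {β : EuclideanSpace ℝ (Fin n) | ∀ i, 0 < β i}
      = ⋂ i, (EuclideanSpace.proj (𝕜 := ℝ) i) ⁻¹' Set.Ioi 0 := by
    ext β; simp
  rw [this]
  exact isOpen_iInter_of_finite fun i =>
    (isOpen_Ioi).preimage (EuclideanSpace.proj (𝕜 := ℝ) i).continuous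

lemma cone_eq_image (n : ℕ) (w : Fin n → EuclideanSpace ℝ (Fin n)) :
    {F : EuclideanSpace ℝ (Fin n) | ∃ β : Fin n → ℝ, (∀ i, 0 < β i) ∧ F = ∑ i, β i • w i}
      = (coneMap n w) '' {β : EuclideanSpace ℝ (Fin n) | ∀ i, 0 < β i} := by
  ext F
  constructor
  · rintro ⟨β, hβ, rfl⟩
    exact ⟨(WithLp.equiv 2 _).symm β, hβ, rfl⟩
  · rintro ⟨β, hβ, rfl⟩
    exact ⟨fun i => β i, hβ, rfl⟩

lemma cone_isOpen (n : ℕ) (w : Fin n → EuclideanSpace ℝ (Fin n))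
    (hw : LinearIndependent ℝ w) :
    IsOpen {F : EuclideanSpace ℝ (Fin n) | ∃ β : Fin n → ℝ, (∀ i, 0 < β i) ∧ F = ∑ i, β i • w i} := by
  rw [cone_eq_image]
  let e : EuclideanSpace ℝ (Fin n) ≃ₗ[ℝ] EuclideanSpace ℝ (Fin n) :=
    LinearEquiv.ofInjectiveEndo (coneMap n w) (coneMap_injective n w hw)
  have hco : ⇑(coneMap n w) = ⇑(e.toContinuousLinearEquiv.toHomeomorph) := by
    simp [e]
  rw [hco]
  exact e.toContinuousLinearEquiv.toHomeomorph.isOpenMap _ (orthantE_isOpen n)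

lemma cone_integral (n : ℕ) (T : EuclideanSpace ℝ (Fin n))
    (w : Fin n → EuclideanSpace ℝ (Fin n)) (hw : LinearIndependent ℝ w)
    (hT : ∀ i, 0 < ⟪w i, T⟫) :
    IntegrableOn (fun F => Real.exp (-⟪F, T⟫))
      {F : EuclideanSpace ℝ (Fin n) | ∃ β : Fin n → ℝ, (∀ i, 0 < β i) ∧ F = ∑ i, β i • w i} ∧
    (∫ F in {F : EuclideanSpace ℝ (Fin n) | ∃ β : Fin n → ℝ, (∀ i, 0 < β i) ∧ F = ∑ i, β i • w i},
        Real.exp (-⟪F, T⟫))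
      = |(Matrix.of fun i j => w i j).det| / ∏ i, ⟪w i, T⟫ := by
  classical
  set c : Fin n → ℝ := fun i => ⟪w i, T⟫ with hc
  set d : ℝ := |(Matrix.of fun i j => w i j).det| with hd
  set s : Set (EuclideanSpace ℝ (Fin n)) := {β | ∀ i, 0 < β i} with hsdef
  have hs : MeasurableSet s := (orthantE_isOpen n).measurableSet
  set L := coneMap n w with hL
  set cL := L.toContinuousLinearMap with hcL
  have hderiv : ∀ x ∈ s, HasFDerivWithinAt (⇑L) cL s x := fun x _ =>
    cL.hasFDerivAt.hasFDerivWithinAt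
  have hinj := (coneMap_injective n w hw).injOn (s := s)
  have hdet : cL.det = (Matrix.of fun i j => w i j).det := by
    rw [ContinuousLinearMap.det, hcL, LinearMap.coe_toContinuousLinearMap, hL,
      coneMap_det]
  have hip : ∀ β : EuclideanSpace ℝ (Fin n),
      ⟪L β, T⟫ = ∑ i, c i * β i := by
    intro β
    rw [hL]
    simp only [coneMap, LinearMap.coe_mk, AddHom.coe_mk, sum_inner, real_inner_smul_left]
    exact Finset.sum_congr rfl fun i _ => mul_comm _ _
  -- the integrand composed with L
  have hfun : (fun x => |cL.det| • Real.exp (-⟪L x, T⟫))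
      = fun x : EuclideanSpace ℝ (Fin n) => d * ∏ i, Real.exp (-(c i * x i)) := by
    funext x
    rw [hdet, hip, smul_eq_mul, ← Finset.sum_neg_distrib, Real.exp_sum]
  -- the orthant as a preimage
  have hpre : s = ((MeasurableEquiv.toLp 2 (Fin n → ℝ)).symm) ⁻¹'
      (Set.pi Set.univ fun _ => Set.Ioi (0:ℝ)) := by
    ext β
    simp only [hsdef, Set.mem_setOf_eq, Set.mem_preimage, Set.mem_pi, Set.mem_univ,
      Set.mem_Ioi, forall_const]
    rfl
  have hmp := EuclideanSpace.volume_preserving_symm_measurableEquiv_toLp (Fin n)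
  have hemb := ((MeasurableEquiv.toLp 2 (Fin n → ℝ)).symm).measurableEmbedding
  constructor
  · rw [cone_eq_image,
      integrableOn_image_iff_integrableOn_abs_det_fderiv_smul volume hs hderiv hinj]
    rw [show (fun x => |(cL).det| • Real.exp (-⟪L x, T⟫)) = _ from hfun, hpre]
    have := (hmp.integrableOn_comp_preimage hemb).mpr
      (((orthant_integrable n c fun i => hT i).const_mul d))
    exact this
  · rw [cone_eq_image,
      integral_image_eq_integral_abs_det_fderiv_smul volume hs hderiv hinj, hfun, hpre]
    have h2 : (∫ x : EuclideanSpace ℝ (Fin n) in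
        ((MeasurableEquiv.toLp 2 (Fin n → ℝ)).symm) ⁻¹' (Set.pi Set.univ fun _ => Set.Ioi (0:ℝ)),
        d * ∏ i, Real.exp (-(c i * x i)))
        = ∫ y in Set.pi Set.univ fun _ => Set.Ioi (0:ℝ), d * ∏ i, Real.exp (-(c i * y i)) :=
      hmp.setIntegral_preimage_emb hemb
        (fun y => d * ∏ i, Real.exp (-(c i * y i)))
        (Set.pi Set.univ fun _ => Set.Ioi (0:ℝ))
    rw [h2, MeasureTheory.integral_const_mul, orthant_integral n c fun i => hT i, hd]
    rw [div_eq_mul_inv, ← Finset.prod_inv_distrib]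
end ConeAux

/-- If `Δ ⊆ ℝⁿ` is, up to a Lebesgue-null set, the disjoint union of finitely many open
simplicial cones `C r` spanned by bases `v r` with `⟪v r i, T⟫ > 0`, then the integral of
`exp (-⟪F, T⟫)` over `Δ` is the sum over `r` of `|det Mʳ| / ∏ i, ⟪v r i, T⟫`. -/
theorem integral_exp_over_triangulated_cone
    (n : ℕ) (hn : 1 ≤ n) (ι : Type) [Fintype ι]
    (T : EuclideanSpace ℝ (Fin n))
    (v : ι → Fin n → EuclideanSpace ℝ (Fin n))
    (hv : ∀ r, LinearIndependent ℝ (v r))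
    (C : ι → Set (EuclideanSpace ℝ (Fin n)))
    (hC : ∀ r, C r = {F : EuclideanSpace ℝ (Fin n) |
      ∃ β : Fin n → ℝ, (∀ i, 0 < β i) ∧ F = ∑ i, β i • v r i})
    (Δ : Set (EuclideanSpace ℝ (Fin n)))
    (hsub : ∀ r, C r ⊆ Δ)
    (hdisj : Pairwise (Function.onFun Disjoint C))
    (hnull : volume (Δ \ ⋃ r, C r) = 0)
    (hT : ∀ r i, 0 < ⟪v r i, T⟫) :
    (∫ F in Δ, Real.exp (-⟪F, T⟫))
      = ∑ r, |(Matrix.of fun i j => v r i j).det| / ∏ i, ⟪v r i, T⟫ := by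
  have key := fun r => cone_integral n T (v r) (hv r) (hT r)
  have hmeas : ∀ r, MeasurableSet (C r) := fun r => by
    rw [hC r]; exact (cone_isOpen n (v r) (hv r)).measurableSet
  have hint : ∀ r, IntegrableOn (fun F => Real.exp (-⟪F, T⟫)) (C r) := fun r => by
    rw [hC r]; exact (key r).1
  have heq : (∫ F in Δ, Real.exp (-⟪F, T⟫))
      = ∫ F in ⋃ r, C r, Real.exp (-⟪F, T⟫) := by
    apply MeasureTheory.setIntegral_congr_set
    rw [MeasureTheory.ae_eq_set]
    refine ⟨hnull, ?_⟩
    rw [Set.diff_eq_empty.mpr (Set.iUnion_subset hsub)]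
    exact measure_empty
  rw [heq, MeasureTheory.integral_iUnion_fintype hmeas hdisj hint]
  refine Finset.sum_congr rfl fun r _ => ?_
  rw [hC r]
  exact (key r).2
end

section
/- Let n ≥ 1, let s : Fin n → Fin n → Fin n → ℝ be (3,n) generalized Mandelstam invariants, and let a, b be two distinct elements of Fin n, with S = Fin n \ {a, b}. Then the sum of s(p, q, r) over all 3-element subsets {p, q, r} of S equals the sum over x ∈ S of s(x, a, b). -/
/-- For (3,n) generalized Mandelstam invariants and distinct labels `a ≠ b`, the sum of
`s p q r` over all 3-element subsets `{p, q, r}` of `S = Fin n \ {a, b}` equals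
`∑ x ∈ S, s x a b`. -/
theorem sum_mandelstam_over_complement_triples
    (n : ℕ) (hn : 1 ≤ n)
    (s : Fin n → Fin n → Fin n → ℝ)
    (hsym1 : ∀ i j k, s i j k = s j i k)
    (hsym2 : ∀ i j k, s i j k = s i k j)
    (hdiag : ∀ i j, s i i j = 0)
    (hmom : ∀ i, (∑ j : Fin n, ∑ k : Fin n, s i j k) = 0)
    (a b : Fin n) (hab : a ≠ b) :
    (∑ i : Fin n, ∑ j : Fin n, ∑ k : Fin n,
      if i < j ∧ j < k ∧ i ≠ a ∧ i ≠ b ∧ j ≠ a ∧ j ≠ b ∧ k ≠ a ∧ k ≠ b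
      then s i j k else 0)
    = ∑ x ∈ Finset.univ.filter (fun x : Fin n => x ≠ a ∧ x ≠ b), s x a b := by
  classical
  set S : Finset (Fin n) := Finset.univ.filter (fun x : Fin n => x ≠ a ∧ x ≠ b) with hS
  have hd2 : ∀ i j, s i j j = 0 := by
    intro i j; rw [hsym1 i j j, hsym2 j i j, hdiag]
  have hd13 : ∀ i j, s i j i = 0 := by
    intro i j; rw [hsym2 i j i, hdiag]
  have hs3 : ∀ i j k, s i j k = s k j i := by
    intro i j k; rw [hsym1 i j k, hsym2 j i k, hsym1 j k i]
  have sumS : ∀ f : Fin n → ℝ, (∑ x ∈ S, f x) = (∑ x, f x) - f a - f b := by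
    intro f
    have h1 : S = Finset.univ \ {a, b} := by
      ext x
      simp [hS, not_or]
    rw [h1, Finset.sum_sdiff_eq_sub (Finset.subset_univ _), Finset.sum_pair hab]
    ring
  set R : ℝ := ∑ x ∈ S, s x a b with hR
  set T : ℝ := ∑ i ∈ S, ∑ j ∈ S, ∑ k ∈ S, (if i < j ∧ j < k then s i j k else 0) with hT
  -- push `if` inside a sum
  have pushif : ∀ (c : Prop) [Decidable c] (f : Fin n → ℝ),
      (if c then ∑ x, f x else 0) = ∑ x, if c then f x else 0 := by
    intro c _ f; split_ifs <;> simp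
  -- Step 0: the LHS equals T
  have step0 : (∑ i : Fin n, ∑ j : Fin n, ∑ k : Fin n,
      if i < j ∧ j < k ∧ i ≠ a ∧ i ≠ b ∧ j ≠ a ∧ j ≠ b ∧ k ≠ a ∧ k ≠ b
      then s i j k else 0) = T := by
    rw [hT, hS]
    simp only [Finset.sum_filter, pushif]
    refine Finset.sum_congr rfl fun i _ => Finset.sum_congr rfl fun j _ =>
      Finset.sum_congr rfl fun k _ => ?_
    split_ifs <;> first | rfl | tauto
  -- W_a : double sum of s i j a over S × S
  have Wa : (∑ i ∈ S, ∑ j ∈ S, s i j a) = -2 * R := by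
    have h1 : ∀ i : Fin n, (∑ j ∈ S, s i j a) = (∑ j, s i j a) - s i b a := by
      intro i
      have := sumS (fun j => s i j a)
      rw [hd2 i a] at this
      linarith
    have h2 : (∑ i ∈ S, (∑ j, s i j a)) = - (∑ j, s b j a) := by
      have h3 := sumS (fun i => ∑ j, s i j a)
      have h4 : (∑ i, ∑ j, s i j a) = 0 := by
        rw [← hmom a]
        refine Finset.sum_congr rfl fun i _ => Finset.sum_congr rfl fun j _ => ?_
        rw [hsym2 i j a, hsym1 i a j]
      have h5 : (∑ j, s a j a) = 0 := Finset.sum_eq_zero fun j _ => hd13 a j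
      rw [h4, h5] at h3
      linarith
    have h6 : (∑ j, s b j a) = R := by
      have h0 := sumS (fun j => s b j a)
      rw [hd2 b a, hdiag b a] at h0
      have h7 : (∑ x ∈ S, s b x a) = ∑ x ∈ S, s x a b := by
        refine Finset.sum_congr rfl fun x _ => ?_
        rw [hsym1 b x a, hsym2 x b a]
      rw [hR]
      linarith
    have h8 : (∑ i ∈ S, s i b a) = R := by
      rw [hR]
      exact Finset.sum_congr rfl fun x _ => hsym2 x b a
    calc (∑ i ∈ S, ∑ j ∈ S, s i j a)
        = (∑ i ∈ S, ((∑ j, s i j a) - s i b a)) :=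
          Finset.sum_congr rfl fun i _ => h1 i
      _ = (∑ i ∈ S, (∑ j, s i j a)) - (∑ i ∈ S, s i b a) := by
          rw [Finset.sum_sub_distrib]
      _ = -2 * R := by rw [h2, h6, h8]; ring
  have Wb : (∑ i ∈ S, ∑ j ∈ S, s i j b) = -2 * R := by
    have h1 : ∀ i : Fin n, (∑ j ∈ S, s i j b) = (∑ j, s i j b) - s i a b := by
      intro i
      have := sumS (fun j => s i j b)
      rw [hd2 i b] at this
      linarith
    have h2 : (∑ i ∈ S, (∑ j, s i j b)) = - (∑ j, s a j b) := by
      have h3 := sumS (fun i => ∑ j, s i j b)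
      have h4 : (∑ i, ∑ j, s i j b) = 0 := by
        rw [← hmom b]
        refine Finset.sum_congr rfl fun i _ => Finset.sum_congr rfl fun j _ => ?_
        rw [hsym2 i j b, hsym1 i b j]
      have h5 : (∑ j, s b j b) = 0 := Finset.sum_eq_zero fun j _ => hd13 b j
      rw [h4, h5] at h3
      linarith
    have h6 : (∑ j, s a j b) = R := by
      have h0 := sumS (fun j => s a j b)
      rw [hdiag a b, hd2 a b] at h0
      have h7 : (∑ x ∈ S, s a x b) = ∑ x ∈ S, s x a b := by
        refine Finset.sum_congr rfl fun x _ => ?_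
        rw [hsym1 a x b]
      rw [hR]
      linarith
    have h8 : (∑ i ∈ S, s i a b) = R := rfl
    calc (∑ i ∈ S, ∑ j ∈ S, s i j b)
        = (∑ i ∈ S, ((∑ j, s i j b) - s i a b)) :=
          Finset.sum_congr rfl fun i _ => h1 i
      _ = (∑ i ∈ S, (∑ j, s i j b)) - (∑ i ∈ S, s i a b) := by
          rw [Finset.sum_sub_distrib]
      _ = -2 * R := by rw [h2, h6, h8]; ring
  -- Step A: row sums
  have rowA : ∀ i : Fin n, (∑ j ∈ S, ∑ k ∈ S, s i j k) =
      -2 * ((∑ j ∈ S, s i j a) + (∑ j ∈ S, s i j b)) - 2 * s i a b := by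
    intro i
    have h1 : ∀ j : Fin n, (∑ k ∈ S, s i j k) = (∑ k, s i j k) - s i j a - s i j b :=
      fun j => sumS (fun k => s i j k)
    have h2 : (∑ j ∈ S, (∑ k, s i j k)) =
        - (∑ k, s i a k) - (∑ k, s i b k) := by
      have h3 := sumS (fun j => ∑ k, s i j k)
      rw [hmom i] at h3
      linarith
    have hTa : (∑ k, s i a k) = (∑ j ∈ S, s i j a) + s i a b := by
      have := sumS (fun k => s i a k)
      rw [hd2 i a] at this
      have h4 : (∑ k ∈ S, s i a k) = ∑ j ∈ S, s i j a := by
        refine Finset.sum_congr rfl fun k _ => ?_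
        rw [hsym2 i a k]
      linarith [h4]
    have hTb : (∑ k, s i b k) = (∑ j ∈ S, s i j b) + s i a b := by
      have := sumS (fun k => s i b k)
      rw [hd2 i b] at this
      have h4 : (∑ k ∈ S, s i b k) = ∑ j ∈ S, s i j b := by
        refine Finset.sum_congr rfl fun k _ => ?_
        rw [hsym2 i b k]
      have h5 : s i b a = s i a b := hsym2 i b a
      linarith [h4]
    calc (∑ j ∈ S, ∑ k ∈ S, s i j k)
        = ∑ j ∈ S, ((∑ k, s i j k) - s i j a - s i j b) :=
          Finset.sum_congr rfl fun j _ => h1 j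
      _ = (∑ j ∈ S, (∑ k, s i j k)) - (∑ j ∈ S, s i j a) - (∑ j ∈ S, s i j b) := by
          rw [Finset.sum_sub_distrib, Finset.sum_sub_distrib]
      _ = -2 * ((∑ j ∈ S, s i j a) + (∑ j ∈ S, s i j b)) - 2 * s i a b := by
          rw [h2, hTa, hTb]; ring
  -- Step C: the full triple sum over S equals 6R
  have main : (∑ i ∈ S, ∑ j ∈ S, ∑ k ∈ S, s i j k) = 6 * R := by
    have h1 : (∑ i ∈ S, ∑ j ∈ S, ∑ k ∈ S, s i j k) =
        -2 * ((∑ i ∈ S, ∑ j ∈ S, s i j a) + (∑ i ∈ S, ∑ j ∈ S, s i j b)) - 2 * R := by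
      calc (∑ i ∈ S, ∑ j ∈ S, ∑ k ∈ S, s i j k)
          = ∑ i ∈ S, (-2 * ((∑ j ∈ S, s i j a) + (∑ j ∈ S, s i j b)) - 2 * s i a b) :=
            Finset.sum_congr rfl fun i _ => rowA i
        _ = -2 * ((∑ i ∈ S, ∑ j ∈ S, s i j a) + (∑ i ∈ S, ∑ j ∈ S, s i j b)) - 2 * R := by
            rw [hR]
            rw [Finset.sum_sub_distrib, ← Finset.mul_sum, Finset.sum_add_distrib,
              ← Finset.mul_sum]
    rw [Wa, Wb] at h1
    linarith
  -- Step D: symmetrization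
  have key : ∀ i j k : Fin n, s i j k =
      (if i < j ∧ j < k then s i j k else 0) + (if i < k ∧ k < j then s i j k else 0)
      + (if j < i ∧ i < k then s i j k else 0) + (if j < k ∧ k < i then s i j k else 0)
      + (if k < i ∧ i < j then s i j k else 0) + (if k < j ∧ j < i then s i j k else 0) := by
    intro i j k
    rcases eq_or_ne i j with rfl | hij
    · rw [hdiag]
      split_ifs <;> first | omega | ring
    rcases eq_or_ne j k with rfl | hjk
    · rw [hd2]
      split_ifs <;> first | omega | ring
    rcases eq_or_ne i k with rfl | hik
    · rw [hd13]
      split_ifs <;> first | omega | ring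
    · split_ifs <;> first | omega | ring
  have comm12 : ∀ f : Fin n → Fin n → Fin n → ℝ,
      (∑ i ∈ S, ∑ j ∈ S, ∑ k ∈ S, f i j k) = ∑ i ∈ S, ∑ j ∈ S, ∑ k ∈ S, f j i k :=
    fun f => Finset.sum_comm
  have comm23 : ∀ f : Fin n → Fin n → Fin n → ℝ,
      (∑ i ∈ S, ∑ j ∈ S, ∑ k ∈ S, f i j k) = ∑ i ∈ S, ∑ j ∈ S, ∑ k ∈ S, f i k j :=
    fun f => Finset.sum_congr rfl fun i _ => Finset.sum_comm
  have base : ∀ g : Fin n → Fin n → Fin n → ℝ, (∀ i j k, g i j k = s i j k) →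
      (∑ i ∈ S, ∑ j ∈ S, ∑ k ∈ S, (if i < j ∧ j < k then g i j k else 0)) = T := by
    intro g hg
    rw [hT]
    refine Finset.sum_congr rfl fun i _ => Finset.sum_congr rfl fun j _ =>
      Finset.sum_congr rfl fun k _ => ?_
    rw [hg]
  -- the six ordered sums all equal T
  have t1 : (∑ i ∈ S, ∑ j ∈ S, ∑ k ∈ S, (if i < j ∧ j < k then s i j k else 0)) = T := rfl
  have t2 : (∑ i ∈ S, ∑ j ∈ S, ∑ k ∈ S, (if i < k ∧ k < j then s i j k else 0)) = T := by
    have hf := comm23 (fun i j k => if i < j ∧ j < k then s i k j else 0)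
    have hb := base (fun i j k => s i k j) (fun i j k => (hsym2 i j k).symm)
    exact hf.symm.trans hb
  have t3 : (∑ i ∈ S, ∑ j ∈ S, ∑ k ∈ S, (if j < i ∧ i < k then s i j k else 0)) = T := by
    have hf := comm12 (fun i j k => if i < j ∧ j < k then s j i k else 0)
    have hb := base (fun i j k => s j i k) (fun i j k => (hsym1 i j k).symm)
    exact hf.symm.trans hb
  have t4 : (∑ i ∈ S, ∑ j ∈ S, ∑ k ∈ S, (if j < k ∧ k < i then s i j k else 0)) = T := by
    have hf1 := comm23 (fun i j k => if i < j ∧ j < k then s k i j else 0)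
    have hf2 := comm12 (fun i j k =>
      (fun i j k => if i < j ∧ j < k then s k i j else 0) i k j)
    have hb : (∑ i ∈ S, ∑ j ∈ S, ∑ k ∈ S, (if i < j ∧ j < k then s k i j else 0)) = T := by
      refine base (fun i j k => s k i j) fun i j k => ?_
      show s k i j = s i j k
      rw [hsym1 k i j, hsym2 i k j]
    exact ((hf1.trans hf2).symm).trans hb
  have t5 : (∑ i ∈ S, ∑ j ∈ S, ∑ k ∈ S, (if k < i ∧ i < j then s i j k else 0)) = T := by
    have hf1 := comm12 (fun i j k => if i < j ∧ j < k then s j k i else 0)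
    have hf2 := comm23 (fun i j k =>
      (fun i j k => if i < j ∧ j < k then s j k i else 0) j i k)
    have hb : (∑ i ∈ S, ∑ j ∈ S, ∑ k ∈ S, (if i < j ∧ j < k then s j k i else 0)) = T := by
      refine base (fun i j k => s j k i) fun i j k => ?_
      show s j k i = s i j k
      rw [hsym2 j k i, hsym1 j i k]
    exact ((hf1.trans hf2).symm).trans hb
  have t6 : (∑ i ∈ S, ∑ j ∈ S, ∑ k ∈ S, (if k < j ∧ j < i then s i j k else 0)) = T := by
    have hf1 := comm12 (fun i j k => if i < j ∧ j < k then s k j i else 0)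
    have hf2 := comm23 (fun i j k =>
      (fun i j k => if i < j ∧ j < k then s k j i else 0) j i k)
    have hf3 := comm12 (fun i j k =>
      (fun i j k => if i < j ∧ j < k then s k j i else 0) k i j)
    have hb : (∑ i ∈ S, ∑ j ∈ S, ∑ k ∈ S, (if i < j ∧ j < k then s k j i else 0)) = T := by
      refine base (fun i j k => s k j i) fun i j k => (hs3 i j k).symm
    exact ((hf1.trans (hf2.trans hf3)).symm).trans hb
  have main2 : (∑ i ∈ S, ∑ j ∈ S, ∑ k ∈ S, s i j k) = 6 * T := by
    have h1 : (∑ i ∈ S, ∑ j ∈ S, ∑ k ∈ S, s i j k) =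
        (∑ i ∈ S, ∑ j ∈ S, ∑ k ∈ S, (if i < j ∧ j < k then s i j k else 0))
        + (∑ i ∈ S, ∑ j ∈ S, ∑ k ∈ S, (if i < k ∧ k < j then s i j k else 0))
        + (∑ i ∈ S, ∑ j ∈ S, ∑ k ∈ S, (if j < i ∧ i < k then s i j k else 0))
        + (∑ i ∈ S, ∑ j ∈ S, ∑ k ∈ S, (if j < k ∧ k < i then s i j k else 0))
        + (∑ i ∈ S, ∑ j ∈ S, ∑ k ∈ S, (if k < i ∧ i < j then s i j k else 0))
        + (∑ i ∈ S, ∑ j ∈ S, ∑ k ∈ S, (if k < j ∧ j < i then s i j k else 0)) := by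
      simp only [← Finset.sum_add_distrib]
      exact Finset.sum_congr rfl fun i _ => Finset.sum_congr rfl fun j _ =>
        Finset.sum_congr rfl fun k _ => key i j k
    rw [t1, t2, t3, t4, t5, t6] at h1
    linarith
  rw [step0]
  rw [main] at main2
  linarith
end
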